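/- arXiv:1302.6954 — 4 statements merged into one kernel-verified Lean document; each statement's English description precedes it below -/
import Mathlib

section
/- Let f : 𝕋¹ → 𝕋¹ be an orientation-preserving homeomorphism with lift f̃ : ℝ → ℝ whose rotation number ρ = ρ(f̃) is irrational. Then f is semiconjugate to the rigid rotation R_ρ : x ↦ x + ρ (mod ℤ): there exists a continuous surjection h : 𝕋¹ → 𝕋¹ such that h ∘ f = R_ρ ∘ h. -/
open Filter Topology Set Function

noncomputable section

/-- The circle 𝕋¹ = ℝ/ℤ. -/
abbrev T1 : Type := AddCircle (1 : ℝ)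

/-- The canonical projection π : ℝ → 𝕋¹. -/
def projC : ℝ → T1 := fun x => (x : T1)

/-- `F` is a lift of the orientation-preserving circle homeomorphism `f`. -/
def IsCircleLift (f : T1 → T1) (F : ℝ → ℝ) : Prop :=
  StrictMono F ∧ (∀ x : ℝ, F (x + 1) = F x + 1) ∧ ∀ x : ℝ, projC (F x) = f (projC x)

/-- **Poincaré's semiconjugacy theorem.**  If the rotation number `ρ` of an
orientation-preserving circle homeomorphism is irrational, then `f` is semiconjugate
to the rigid rotation `R_ρ : x ↦ x + ρ (mod ℤ)`. -/
theorem irrational_rotation_number_semiconjugacy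
    (f : T1 ≃ₜ T1) (F : ℝ ≃ₜ ℝ) (hF : IsCircleLift ⇑f ⇑F) (ρ : ℝ)
    (hρ : ∀ x : ℝ, Tendsto (fun n : ℕ => ((⇑F)^[n] x - x) / (n : ℝ)) atTop (𝓝 ρ))
    (hirr : Irrational ρ) :
    ∃ h : T1 → T1, Continuous h ∧ Function.Surjective h ∧
      ∀ z : T1, h (f z) = h z + (ρ : T1) := by
  obtain ⟨hmono, hadd, hproj⟩ := hF
  set F' : CircleDeg1Lift := ⟨⟨⇑F, hmono.monotone⟩, hadd⟩ with hF'def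
  have hcoe : ⇑F' = ⇑F := rfl
  -- translation number of F' is ρ
  have hτ : F'.translationNumber = ρ := by
    have h1 := F'.tendsto_translationNumber 0
    refine tendsto_nhds_unique ?_ (hρ 0)
    simpa [CircleDeg1Lift.coe_pow, hcoe] using h1
  -- semiconjugacy at the level of lifts
  obtain ⟨H, hH⟩ : ∃ H : CircleDeg1Lift, Function.Semiconj ⇑H ⇑F'
      ⇑((CircleDeg1Lift.translate (Multiplicative.ofAdd ρ) : CircleDeg1Liftˣ) : CircleDeg1Lift) := by
    refine CircleDeg1Lift.semiconj_of_isUnit_of_translationNumber_eq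
      (CircleDeg1Lift.isUnit_iff_bijective.2 (hcoe ▸ F.bijective)) (Units.isUnit _) ?_
    rw [hτ, CircleDeg1Lift.translationNumber_translate]
  have hsemi : ∀ x : ℝ, H (F x) = ρ + H x := fun x => by
    have := hH x
    rwa [hcoe, CircleDeg1Lift.translate_apply] at this
  -- range of H contains H x + m • ρ for all m : ℤ
  have hrng : ∀ m : ℤ, ∀ x : ℝ, ∃ y, H y = H x + m * ρ := by
    intro m
    induction m using Int.induction_on with
    | zero => exact fun x => ⟨x, by ring⟩
    | succ n ih =>
        intro x
        obtain ⟨y, hy⟩ := ih x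
        exact ⟨F y, by rw [hsemi, hy]; push_cast; ring⟩
    | pred n ih =>
        intro x
        obtain ⟨y, hy⟩ := ih x
        refine ⟨F.symm y, ?_⟩
        have h3 := hsemi (F.symm y)
        rw [F.apply_symm_apply] at h3
        have h2 : H (F.symm y) = H y - ρ := by linarith
        rw [h2, hy]; push_cast; ring
  -- the subgroup generated by 1 and ρ is dense
  have hdsub : Dense ((AddSubgroup.closure {1, ρ} : AddSubgroup ℝ) : Set ℝ) := by
    rcases AddSubgroup.dense_or_cyclic (AddSubgroup.closure {1, ρ}) with h | ⟨a, ha⟩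
    · exact h
    · exfalso
      have h1 : (1 : ℝ) ∈ AddSubgroup.closure ({1, ρ} : Set ℝ) :=
        AddSubgroup.subset_closure (by simp)
      have h2 : ρ ∈ AddSubgroup.closure ({1, ρ} : Set ℝ) :=
        AddSubgroup.subset_closure (by simp)
      rw [ha, AddSubgroup.mem_closure_singleton] at h1 h2
      obtain ⟨n, hn⟩ := h1
      obtain ⟨m, hm⟩ := h2
      simp only [zsmul_eq_mul] at hn hm
      have hn0 : (n : ℝ) ≠ 0 := by
        rintro h; rw [h, zero_mul] at hn; exact one_ne_zero hn.symm
      refine hirr ⟨(m : ℚ) / (n : ℚ), ?_⟩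
      have key : (m : ℝ) = ρ * n := by
        calc (m : ℝ) = m * (n * a) := by rw [hn]; ring
        _ = (m * a) * n := by ring
        _ = ρ * n := by rw [hm]
      push_cast
      rw [div_eq_iff hn0, key]
  -- every element of the subgroup shifts range of H into itself
  have hshift : ∀ g ∈ AddSubgroup.closure ({1, ρ} : Set ℝ), ∃ y, H y = H 0 + g := by
    intro g hg
    rw [AddSubgroup.mem_closure_pair] at hg
    obtain ⟨k, l, hkl⟩ := hg
    obtain ⟨y, hy⟩ := hrng l 0
    refine ⟨y + k, ?_⟩
    rw [H.map_add_int, hy, ← hkl]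
    simp [zsmul_eq_mul]
    ring
  -- range of H is dense
  have hdense : DenseRange ⇑H := by
    intro z
    rw [mem_closure_iff]
    intro U hU hzU
    have hz' := hdsub (z - H 0)
    rw [mem_closure_iff] at hz'
    obtain ⟨g, hgU, hgS⟩ := hz' ((H 0 + ·) ⁻¹' U)
      (hU.preimage (continuous_const.add continuous_id)) (by simpa using hzU)
    obtain ⟨y, hy⟩ := hshift g hgS
    exact ⟨H 0 + g, hgU, y, hy⟩
  -- H is continuous
  have hHcont : Continuous ⇑H := H.monotone.continuous_of_denseRange hdense
  -- H is surjective
  have hHsurj : Function.Surjective ⇑H := by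
    refine hHcont.surjective ?_ ?_
    · refine tendsto_atTop_mono (fun x => ?_)
        (tendsto_atTop_add_const_left _ (H 0) (tendsto_atTop_add_const_right _ (-1) tendsto_id))
      have h1 : H ((⌊x⌋ : ℤ) : ℝ) ≤ H x := H.monotone (Int.floor_le x)
      rw [H.map_int_of_map_zero] at h1
      have h2 := Int.sub_one_lt_floor x
      simp only [id_eq]
      push_cast at h1 ⊢
      linarith
    · refine tendsto_atBot_mono (fun x => ?_)
        (tendsto_atBot_add_const_left _ (H 0) (tendsto_atBot_add_const_right _ 1 tendsto_id))
      have h1 : H x ≤ H ((⌈x⌉ : ℤ) : ℝ) := H.monotone (Int.le_ceil x)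
      rw [H.map_int_of_map_zero] at h1
      have h2 := Int.ceil_lt_add_one x
      simp only [id_eq]
      push_cast at h1 ⊢
      linarith
  -- define h on the circle
  have hwd : ∀ (a b : ℝ), @Setoid.r ℝ (QuotientAddGroup.leftRel (AddSubgroup.zmultiples (1:ℝ))) a b → projC (H a) = projC (H b) := by
    intro a b hab
    replace hab := QuotientAddGroup.leftRel_apply.mp hab
    obtain ⟨n, hn⟩ := hab
    simp only [zsmul_eq_mul, mul_one] at hn
    have hb : b = a + n := by linarith
    subst hb
    rw [H.map_add_int]
    unfold projC
    rw [QuotientAddGroup.eq_iff_sub_mem]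
    exact ⟨-n, by simp [zsmul_eq_mul]⟩
  refine ⟨fun z => Quotient.liftOn' z (fun x => projC (H x)) hwd, ?_, ?_, ?_⟩
  · exact Continuous.quotient_liftOn' ((AddCircle.continuous_mk' 1).comp hHcont) hwd
  · intro z
    obtain ⟨y, rfl⟩ := QuotientAddGroup.mk_surjective z
    obtain ⟨x, hx⟩ := hHsurj y
    exact ⟨(x : T1), by show projC (H x) = _; rw [hx]; rfl⟩
  · intro z
    obtain ⟨x, rfl⟩ := QuotientAddGroup.mk_surjective z
    have h1 : f ((x : ℝ) : T1) = ((F x : ℝ) : T1) := (hproj x).symm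
    rw [h1]
    show projC (H (F x)) = projC (H x) + (ρ : T1)
    rw [hsemi]
    unfold projC
    push_cast
    rw [add_comm]
    rfl
end
end

section
/- Let f : 𝕋² → 𝕋² be a minimal homeomorphism homotopic to the identity which is a pseudo-rotation with totally irrational rotation vector ρ = (ρ₁, ρ₂) ∈ ℝ² and which has the bounded mean motion property. Then f is semiconjugate to the rigid rotation R_ρ : 𝕋² → 𝕋²: there is a continuous surjection h : 𝕋² → 𝕋² with h ∘ f = R_ρ ∘ h. -/
open Filter Topology Set Function

noncomputable section

/-- The torus 𝕋² = ℝ²/ℤ². -/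
abbrev T2 : Type := AddCircle (1 : ℝ) × AddCircle (1 : ℝ)

/-- The canonical projection π : ℝ² → 𝕋². -/
def proj : ℝ × ℝ → T2 := fun p => ((p.1 : AddCircle (1 : ℝ)), (p.2 : AddCircle (1 : ℝ)))

/-- `F` is a lift of `f`: it projects to `f` and commutes with integer translations. -/
def IsLift (f : T2 → T2) (F : ℝ × ℝ → ℝ × ℝ) : Prop :=
  (∀ x, proj (F x) = f (proj x)) ∧
    ∀ (x : ℝ × ℝ) (v : ℤ × ℤ),
      F (x + ((v.1 : ℝ), (v.2 : ℝ))) = F x + ((v.1 : ℝ), (v.2 : ℝ))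

/-- Integer iterates of a homeomorphism. -/
def hIter {X : Type*} [TopologicalSpace X] (f : X ≃ₜ X) : ℤ → X → X
  | Int.ofNat n => (⇑f)^[n]
  | Int.negSucc n => (⇑f.symm)^[n + 1]

/-- `f` is a pseudo-rotation with rotation vector `ρ`, witnessed by the lift `F`. -/
def IsPseudoRotation (F : ℝ × ℝ → ℝ × ℝ) (ρ : ℝ × ℝ) : Prop :=
  ∀ x : ℝ × ℝ, Tendsto (fun n : ℕ => ((n : ℝ))⁻¹ • (F^[n] x - x)) atTop (𝓝 ρ)

/-- The bounded mean motion property for the lift `F` with rotation vector `ρ`. -/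
def BoundedMeanMotion (F : (ℝ × ℝ) ≃ₜ (ℝ × ℝ)) (ρ : ℝ × ℝ) : Prop :=
  ∃ C : ℝ, ∀ (x : ℝ × ℝ) (n : ℤ), ‖hIter F n x - x - (n : ℝ) • ρ‖ ≤ C

/-- `ρ = (ρ₁, ρ₂)` is totally irrational: `1, ρ₁, ρ₂` are linearly independent over ℚ. -/
def TotallyIrrational (ρ : ℝ × ℝ) : Prop :=
  ∀ q₀ q₁ q₂ : ℚ, (q₀ : ℝ) + (q₁ : ℝ) * ρ.1 + (q₂ : ℝ) * ρ.2 = 0 → q₀ = 0 ∧ q₁ = 0 ∧ q₂ = 0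

/-- The rigid rotation `R_ρ` of the torus. -/
def Rrot (ρ : ℝ × ℝ) : T2 → T2 :=
  fun z => (z.1 + (ρ.1 : AddCircle (1 : ℝ)), z.2 + (ρ.2 : AddCircle (1 : ℝ)))


namespace Jaeger

lemma isOpenQuotientMap_proj : IsOpenQuotientMap proj := by
  have h : IsOpenQuotientMap (QuotientAddGroup.mk : ℝ → AddCircle (1:ℝ)) :=
    QuotientAddGroup.isOpenQuotientMap_mk
  exact h.prodMap h

lemma continuous_proj : Continuous proj := isOpenQuotientMap_proj.continuous

lemma surjective_proj : Function.Surjective proj := isOpenQuotientMap_proj.surjective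

lemma proj_add (a b : ℝ × ℝ) : proj (a + b) = proj a + proj b := rfl

lemma proj_zsmul (n : ℤ) (a : ℝ × ℝ) : proj (n • a) = n • proj a := by
  have : proj = (AddMonoidHom.mk' proj proj_add) := rfl
  rw [this, AddMonoidHom.map_zsmul]

lemma proj_int (v : ℤ × ℤ) : proj (((v.1 : ℝ), (v.2 : ℝ))) = 0 := by
  unfold proj
  ext
  · exact (AddCircle.coe_eq_zero_iff 1).2 ⟨v.1, by simp⟩
  · exact (AddCircle.coe_eq_zero_iff 1).2 ⟨v.2, by simp⟩

lemma proj_int_add (x : ℝ × ℝ) (v : ℤ × ℤ) :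
    proj (x + ((v.1 : ℝ), (v.2 : ℝ))) = proj x := by
  rw [proj_add, proj_int, add_zero]

lemma proj_eq_iff {x y : ℝ × ℝ} (h : proj x = proj y) :
    ∃ v : ℤ × ℤ, y = x + ((v.1 : ℝ), (v.2 : ℝ)) := by
  have h1 : (x.1 : AddCircle (1:ℝ)) = (y.1 : AddCircle (1:ℝ)) := congrArg Prod.fst h
  have h2 : (x.2 : AddCircle (1:ℝ)) = (y.2 : AddCircle (1:ℝ)) := congrArg Prod.snd h
  have e1 : ((y.1 - x.1 : ℝ) : AddCircle (1:ℝ)) = 0 := by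
    rw [QuotientAddGroup.mk_sub, ← h1, sub_self]
  have e2 : ((y.2 - x.2 : ℝ) : AddCircle (1:ℝ)) = 0 := by
    rw [QuotientAddGroup.mk_sub, ← h2, sub_self]
  obtain ⟨n, hn⟩ := (AddCircle.coe_eq_zero_iff 1).1 e1
  obtain ⟨m, hm⟩ := (AddCircle.coe_eq_zero_iff 1).1 e2
  refine ⟨(n, m), ?_⟩
  have hn' : (n : ℝ) = y.1 - x.1 := by simpa using hn
  have hm' : (m : ℝ) = y.2 - x.2 := by simpa using hm
  ext
  · simp [hn']
  · simp [hm']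

end Jaeger
namespace Jaeger

lemma dense_pair {α : ℝ} (hα : Irrational α) :
    Dense ((AddSubgroup.closure {α, 1} : AddSubgroup ℝ) : Set ℝ) := by
  rcases (AddSubgroup.closure {α, (1:ℝ)}).dense_or_cyclic with h | ⟨a, ha⟩
  · exact h
  · exfalso
    have h1 : (1:ℝ) ∈ AddSubgroup.closure {α, (1:ℝ)} := AddSubgroup.subset_closure (by simp)
    have h2 : α ∈ AddSubgroup.closure {α, (1:ℝ)} := AddSubgroup.subset_closure (by simp)
    rw [ha, ← AddSubgroup.zmultiples_eq_closure] at h1 h2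
    obtain ⟨n, hn⟩ := AddSubgroup.mem_zmultiples_iff.1 h1
    obtain ⟨m, hm⟩ := AddSubgroup.mem_zmultiples_iff.1 h2
    rw [zsmul_eq_mul] at hn hm
    have hn0 : (n : ℝ) ≠ 0 := by
      rintro h; rw [h, zero_mul] at hn; exact one_ne_zero hn.symm
    refine hα ⟨(m : ℚ) / (n : ℚ), ?_⟩
    have hnz : n ≠ 0 := fun h => hn0 (by rw [h]; simp)
    have hn0' : (n : ℚ) ≠ 0 := by exact_mod_cast hnz
    rw [← hm]
    have ha' : a = 1 / n := by field_simp; linarith [hn]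
    rw [ha']
    push_cast
    field_simp

/-- Uniqueness of small representatives in `AddCircle α`. -/
lemma small_rep {α : ℝ} (hα : 0 < α) {y y' : ℝ}
    (h : (y : AddCircle α) = (y' : AddCircle α)) (hy : |y| < α/2) (hy' : |y'| < α/2) :
    y = y' := by
  have h0 : ((y - y' : ℝ) : AddCircle α) = 0 := by rw [QuotientAddGroup.mk_sub, h, sub_self]
  obtain ⟨n, hn⟩ := (AddCircle.coe_eq_zero_iff α).1 h0
  rw [zsmul_eq_mul] at hn
  have h1 : |(n:ℝ)| * α < α := by
    rw [← abs_of_pos hα, ← abs_mul, hn, abs_of_pos hα]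
    calc |y - y'| ≤ |y| + |y'| := abs_sub _ _
    _ < α := by linarith
  have h2 : |(n:ℝ)| < 1 := by
    by_contra hc
    push_neg at hc
    nlinarith
  have h3 : |n| < 1 := by exact_mod_cast (by rw [Int.cast_abs]; exact h2 : ((|n| : ℤ) : ℝ) < 1)
  have hn0 : n = 0 := by have := abs_lt.mp h3; omega
  rw [hn0] at hn
  simp at hn
  linarith

set_option maxHeartbeats 1000000 in
/-- Classification of continuous additive homs `ℝ → AddCircle α`. -/
lemma hom_real_addCircle {α : ℝ} (hα : 0 < α) (ψ : ℝ →+ AddCircle α) (hψ : Continuous ψ) :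
    ∃ c : ℝ, ∀ x : ℝ, ψ x = ((c * x : ℝ) : AddCircle α) := by
  classical
  set P : ℝ → Prop := fun x => ∃ y : ℝ, |y| < α/8 ∧ (y : AddCircle α) = ψ x with hP
  set g : ℝ → ℝ := fun x => if h : P x then h.choose else 0 with hgdef
  have hg : ∀ x, P x → |g x| < α/8 ∧ ((g x : ℝ) : AddCircle α) = ψ x := by
    intro x hx
    simp only [hgdef, dif_pos hx]
    exact hx.choose_spec
  obtain ⟨δ, hδpos, hδ⟩ : ∃ δ > 0, ∀ x : ℝ, |x| < δ → P x := by
    have hU : (QuotientAddGroup.mk '' Metric.ball 0 (α/8) : Set (AddCircle α)) ∈ 𝓝 (ψ 0) := by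
      rw [map_zero]
      have : IsOpen (QuotientAddGroup.mk '' Metric.ball 0 (α/8) : Set (AddCircle α)) :=
        QuotientAddGroup.isOpenQuotientMap_mk.isOpenMap _ Metric.isOpen_ball
      exact this.mem_nhds ⟨0, by simp [Metric.mem_ball]; positivity, by simp⟩
    have h2 := (hψ.continuousAt (x := 0)).preimage_mem_nhds hU
    rw [Metric.mem_nhds_iff] at h2
    obtain ⟨δ, hδpos, hδ⟩ := h2
    refine ⟨δ, hδpos, fun x hx => ?_⟩
    have : x ∈ Metric.ball (0:ℝ) δ := by simpa [Real.dist_eq] using hx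
    obtain ⟨y, hy, hyx⟩ := hδ this
    exact ⟨y, by simpa [Real.dist_eq] using hy, hyx⟩
  have hgs : ∀ x, |x| < δ → |g x| < α/8 ∧ ((g x : ℝ) : AddCircle α) = ψ x :=
    fun x hx => hg x (hδ x hx)
  have hgadd : ∀ x y, |x| < δ → |y| < δ → |x + y| < δ → g (x + y) = g x + g y := by
    intro x y hx hy hxy
    obtain ⟨b1, e1⟩ := hgs x hx
    obtain ⟨b2, e2⟩ := hgs y hy
    obtain ⟨b3, e3⟩ := hgs (x+y) hxy
    have ecoe : ((g (x+y) : ℝ) : AddCircle α) = ((g x + g y : ℝ) : AddCircle α) := by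
      rw [e3, QuotientAddGroup.mk_add, e1, e2, map_add]
    exact small_rep hα ecoe (by linarith) (by have := abs_add_le (g x) (g y); linarith)
  have hg0 : g 0 = 0 := by
    have h := hgadd 0 0 (by simpa using hδpos) (by simpa using hδpos) (by simpa using hδpos)
    simp only [add_zero] at h
    linarith
  have hmul : ∀ (n : ℕ) (x : ℝ), |x| < δ → |(n:ℝ) * x| < δ → g ((n:ℝ) * x) = n * g x := by
    intro n
    induction n with
    | zero => intro x hx hnx; simpa using hg0
    | succ k ih =>
      intro x hx hnx
      have hcast : ((k+1:ℕ):ℝ) = (k:ℝ) + 1 := by push_cast; ring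
      rw [hcast] at hnx ⊢
      have hkx : |(k:ℝ) * x| < δ := by
        calc |(k:ℝ)*x| = (k:ℝ) * |x| := by rw [abs_mul, abs_of_nonneg (Nat.cast_nonneg k)]
        _ ≤ ((k:ℝ)+1) * |x| := by nlinarith [abs_nonneg x]
        _ = |((k:ℝ)+1) * x| := by
              rw [abs_mul, abs_of_nonneg (show (0:ℝ) ≤ (k:ℝ)+1 by positivity)]
        _ < δ := hnx
      have e : ((k:ℝ)+1) * x = (k:ℝ)*x + x := by ring
      rw [e, hgadd _ _ hkx hx (by rw [← e]; exact hnx), ih x hx hkx]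
      ring
  have hcont0 : ∀ ε > 0, ∃ δ' > 0, ∀ x, |x| < δ' → |g x| < ε := by
    intro ε hε
    obtain ⟨N, hN⟩ := exists_nat_gt (α/8/ε)
    have hN0 : 0 < (N:ℝ) := lt_of_le_of_lt (by positivity) hN
    refine ⟨δ/(N+1), by positivity, fun x hx => ?_⟩
    have hxδ : |x| < δ := lt_of_lt_of_le hx (by rw [div_le_iff₀ (by positivity)]; nlinarith)
    have hNx : |(N:ℝ)*x| < δ := by
      rw [abs_mul, abs_of_nonneg (Nat.cast_nonneg N)]
      calc (N:ℝ) * |x| < (N:ℝ) * (δ/(N+1)) := by apply mul_lt_mul_of_pos_left hx hN0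
      _ < δ := by
          rw [mul_comm, div_mul_eq_mul_div, div_lt_iff₀ (by positivity : (0:ℝ) < (N:ℝ)+1)]
          nlinarith
    have hNg := hmul N x hxδ hNx
    have hb := (hgs _ hNx).1
    rw [hNg, abs_mul, abs_of_nonneg (Nat.cast_nonneg N)] at hb
    by_contra hc
    push_neg at hc
    have h10 : (N:ℝ) * ε ≤ (N:ℝ) * |g x| := by gcongr
    have h11 : α/8/ε * ε < (N:ℝ) * ε := by apply mul_lt_mul_of_pos_right hN hε
    rw [div_mul_cancel₀ _ (ne_of_gt hε)] at h11
    linarith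
  -- proportionality
  have hprop : ∀ x y, 0 < x → x < δ → 0 < y → y < δ → g x = (x/y) * g y := by
    intro x y hx hxδ hy hyδ
    have key : ∀ ε > 0, |g x - (x/y) * g y| ≤ ε := by
      intro ε hε
      obtain ⟨δ', hδ'pos, hδ'⟩ := hcont0 (ε/2) (by positivity)
      obtain ⟨n, hn⟩ := exists_nat_gt (max (y/δ') (2 * |g y| / ε))
      have hn0 : 0 < (n:ℝ) := lt_of_le_of_lt (le_max_iff.2 (Or.inl (by positivity))) hn
      set m : ℕ := ⌊(n:ℝ) * x / y⌋₊ with hm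
      have hnxy : 0 ≤ (n:ℝ) * x / y := by positivity
      have hm1 : (m:ℝ) ≤ (n:ℝ) * x / y := Nat.floor_le hnxy
      have hm2 : (n:ℝ) * x / y < (m:ℝ) + 1 := Nat.lt_floor_add_one _
      have hn1 : (1:ℝ) ≤ (n:ℝ) := by
        have : 1 ≤ n := Nat.cast_pos.mp hn0
        exact_mod_cast this
      have hyn : |y / n| < δ := by
        rw [abs_of_pos (by positivity)]
        exact lt_of_le_of_lt (div_le_self hy.le hn1) hyδ
      -- g y = n * g (y/n)
      have hny : (n:ℝ) * (y / n) = y := by field_simp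
      have hgy : g y = (n:ℝ) * g (y / n) := by
        have hb : |(n:ℝ) * (y/n)| < δ := by rw [hny, abs_of_pos hy]; exact hyδ
        rw [← hmul n (y/n) hyn hb, hny]
      have hgyn : g (y/n) = g y / n := by
        rw [eq_div_iff (ne_of_gt hn0), hgy]; ring
      have hmyn_le : (m:ℝ) * (y / n) ≤ x := by
        have h1 : (m:ℝ) * y ≤ (n:ℝ) * x := (le_div_iff₀ hy).1 hm1
        have e : (m:ℝ) * (y/n) = (m:ℝ)*y/n := by ring
        rw [e, div_le_iff₀ hn0]
        nlinarith
      have hmyn_nonneg : 0 ≤ (m:ℝ) * (y / n) := by positivity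
      have hmyn : |(m:ℝ) * (y / n)| < δ := by
        rw [abs_of_nonneg hmyn_nonneg]
        exact lt_of_le_of_lt hmyn_le hxδ
      have hgm : g ((m:ℝ) * (y / n)) = (m:ℝ) * g (y / n) := hmul m (y/n) hyn hmyn
      set r : ℝ := x - (m:ℝ) * (y / n) with hr
      have hr0 : 0 ≤ r := by simp only [hr]; linarith
      have hrlt : r ≤ y / n := by
        have h2 : (n:ℝ) * x < ((m:ℝ)+1) * y := (div_lt_iff₀ hy).1 hm2
        have h3 : x < ((m:ℝ)+1) * y / n := by rw [lt_div_iff₀ hn0]; nlinarith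
        have e : ((m:ℝ)+1) * y / n = (m:ℝ)*(y/n) + y/n := by ring
        rw [e] at h3
        simp only [hr]
        linarith
      have hrδ : |r| < δ := by
        rw [abs_of_nonneg hr0]
        exact lt_of_le_of_lt (hrlt.trans (div_le_self hy.le hn1)) hyδ
      have hsplit : g x = (m:ℝ) * g (y/n) + g r := by
        have e : (m:ℝ)*(y/n) + r = x := by simp only [hr]; ring
        have h4 := hgadd ((m:ℝ)*(y/n)) r hmyn hrδ (by rw [e, abs_of_pos hx]; exact hxδ)
        rw [e] at h4
        rw [h4, hgm]
      have hrsmall : |r| < δ' := by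
        rw [abs_of_nonneg hr0]
        have hny' : y / n < δ' := by
          rw [div_lt_iff₀ hn0]
          have h5 : y / δ' < n := lt_of_le_of_lt (le_max_left _ _) hn
          rw [div_lt_iff₀ hδ'pos] at h5
          linarith
        exact lt_of_le_of_lt hrlt hny'
      have hgr : |g r| < ε/2 := hδ' r hrsmall
      have hle : (m:ℝ)/n ≤ x/y := by
        rw [div_le_div_iff₀ hn0 hy]
        nlinarith [(le_div_iff₀ hy).1 hm1]
      have hlt : x/y - (m:ℝ)/n ≤ 1/n := by
        have h2 : (n:ℝ) * x < ((m:ℝ)+1) * y := (div_lt_iff₀ hy).1 hm2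
        have h6 : x/y ≤ ((m:ℝ)+1)/n := by rw [div_le_div_iff₀ hy hn0]; nlinarith
        have e2 : (1:ℝ)/(n:ℝ) + (m:ℝ)/n = ((m:ℝ)+1)/n := by ring
        linarith
      have hgyb : |g y| / n < ε/2 := by
        rw [div_lt_iff₀ hn0]
        have h7 := lt_of_le_of_lt (le_max_right (y/δ') _) hn
        rw [div_lt_iff₀ hε] at h7
        nlinarith
      have hdecomp : g x - (x/y) * g y = ((m:ℝ)/n - x/y) * g y + g r := by
        rw [hsplit, hgyn]; field_simp; ring
      calc |g x - (x/y)*g y| = |((m:ℝ)/n - x/y) * g y + g r| := by rw [hdecomp]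
      _ ≤ |((m:ℝ)/n - x/y) * g y| + |g r| := abs_add_le _ _
      _ = |(m:ℝ)/n - x/y| * |g y| + |g r| := by rw [abs_mul]
      _ ≤ (1/n) * |g y| + |g r| := by
            gcongr
            rw [abs_le]
            constructor
            · linarith
            · linarith [hle, (by positivity : (0:ℝ) ≤ 1/(n:ℝ))]
      _ ≤ ε/2 + ε/2 := by
            have h1 : (1:ℝ)/n * |g y| ≤ ε/2 := by
              have e3 : (1:ℝ)/n * |g y| = |g y| / n := by ring
              linarith [hgyb]
            exact add_le_add h1 hgr.le
      _ = ε := by ring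
    by_contra hne
    have hpos : 0 < |g x - (x/y) * g y| := abs_pos.2 (fun h => hne (by linarith [sub_eq_zero.1 h]))
    have := key (|g x - (x/y) * g y| / 2) (by positivity)
    linarith
  -- conclusion
  set c : ℝ := g (δ/2) / (δ/2) with hc
  have hcx : ∀ x, |x| < δ → g x = c * x := by
    intro x hxδ
    rcases lt_trichotomy x 0 with hneg | hzero | hpos
    · have hx' : 0 < -x := by linarith
      have h1 : g (-x) = c * (-x) := by
        have h8 := hprop (-x) (δ/2) hx' (by rw [abs_lt] at hxδ; linarith) (by positivity) (by linarith)
        rw [h8, hc]; try ring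
      have h2 := hgadd x (-x) hxδ (by rwa [abs_neg]) (by simpa using hδpos)
      simp only [add_neg_cancel] at h2
      rw [hg0] at h2
      have : g x = - g (-x) := by linarith
      rw [this, h1]; ring
    · rw [hzero, hg0]; ring
    · have h8 := hprop x (δ/2) hpos (lt_of_abs_lt hxδ) (by positivity) (by linarith)
      rw [h8, hc]; try ring
  refine ⟨c, fun x => ?_⟩
  obtain ⟨n, hn⟩ := exists_nat_gt (|x| / δ)
  have hn0 : 0 < (n:ℝ) := lt_of_le_of_lt (by positivity) hn
  have hxn : |x / n| < δ := by
    have habs : |(n:ℝ)| = (n:ℝ) := abs_of_nonneg (Nat.cast_nonneg n)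
    rw [abs_div, habs, div_lt_iff₀ hn0]
    rw [div_lt_iff₀ hδpos] at hn
    nlinarith
  have e1 : ψ x = n • ψ (x / n) := by
    rw [← map_nsmul ψ n (x/(n:ℝ)), nsmul_eq_mul]
    congr 1
    field_simp
  rw [e1, ← (hgs (x/n) hxn).2, hcx (x/n) hxn]
  have e2 : (n : ℕ) • ((c * (x/n) : ℝ) : AddCircle α) = ((n • (c * (x/n)) : ℝ) : AddCircle α) :=
    (map_nsmul (QuotientAddGroup.mk' (AddSubgroup.zmultiples α)) n _).symm
  rw [e2]
  congr 1
  rw [nsmul_eq_mul]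
  field_simp

end Jaeger
namespace Jaeger

/-- The subgroup ℤρ + ℤ² of ℝ². -/
def latG (ρ : ℝ × ℝ) : AddSubgroup (ℝ × ℝ) where
  carrier := {x | ∃ n m₁ m₂ : ℤ, x = n • ρ + ((m₁ : ℝ), (m₂ : ℝ))}
  add_mem' := by
    rintro a b ⟨n, m1, m2, rfl⟩ ⟨k, l1, l2, rfl⟩
    refine ⟨n + k, m1 + l1, m2 + l2, ?_⟩
    rw [add_zsmul]
    push_cast
    ext <;> simp <;> ring
  zero_mem' := ⟨0, 0, 0, by ext <;> simp⟩
  neg_mem' := by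
    rintro a ⟨n, m1, m2, rfl⟩
    refine ⟨-n, -m1, -m2, ?_⟩
    rw [neg_zsmul, neg_add]
    push_cast
    ext <;> simp

lemma irrational_fst {ρ : ℝ × ℝ} (hirr : TotallyIrrational ρ) : Irrational ρ.1 := by
  rintro ⟨q, hq⟩
  have := hirr q (-1) 0 (by push_cast; rw [hq]; ring)
  exact absurd this.2.1 (by norm_num)

set_option maxHeartbeats 2000000 in
theorem dense_latG (ρ : ℝ × ℝ) (hirr : TotallyIrrational ρ) :
    Dense ((latG ρ : AddSubgroup (ℝ × ℝ)) : Set (ℝ × ℝ)) := by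
  classical
  have hirr1 : Irrational ρ.1 := irrational_fst hirr
  set G := latG ρ with hG
  set Gc := G.topologicalClosure with hGcdef
  have hcoe : (Gc : Set (ℝ × ℝ)) = closure (G : Set (ℝ × ℝ)) := rfl
  have hGcclosed : IsClosed (Gc : Set (ℝ × ℝ)) := AddSubgroup.isClosed_topologicalClosure G
  have hsub : (G : Set (ℝ × ℝ)) ⊆ (Gc : Set (ℝ × ℝ)) := by
    rw [hcoe]; exact subset_closure
  have hmemG : ∀ n m₁ m₂ : ℤ, (n • ρ + ((m₁ : ℝ), (m₂ : ℝ))) ∈ G := fun n m1 m2 => ⟨n, m1, m2, rfl⟩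
  have h01 : ((0 : ℝ), (1 : ℝ)) ∈ Gc := hsub (by refine ⟨0, 0, 1, ?_⟩; ext <;> simp)
  set T : AddSubgroup ℝ := Gc.comap (AddMonoidHom.inr ℝ ℝ) with hT
  have hTmem : ∀ t : ℝ, t ∈ T ↔ ((0 : ℝ), t) ∈ Gc := fun t => Iff.rfl
  have hTclosed : IsClosed (T : Set ℝ) := by
    have hcont : Continuous (fun t : ℝ => ((0 : ℝ), t)) := continuous_const.prodMk continuous_id
    exact hGcclosed.preimage hcont
  have h1T : (1 : ℝ) ∈ T := h01
  -- it suffices to show everything is in Gc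
  suffices hall : ∀ p : ℝ × ℝ, p ∈ Gc by
    intro p
    rw [← hcoe]
    exact hall p
  -- vertical integer moves
  have hvert : ∀ (m : ℤ), ((0 : ℝ), (m : ℝ)) ∈ Gc := by
    intro m
    have h := zsmul_mem h01 m
    have e : m • ((0:ℝ), (1:ℝ)) = ((0:ℝ), (m:ℝ)) := by
      ext <;> simp [zsmul_eq_mul]
    rwa [e] at h
  -- the horizontal subgroup A
  set A := AddSubgroup.closure {ρ.1, (1 : ℝ)} with hA
  have hAdense : Dense (A : Set ℝ) := dense_pair hirr1
  have hAG : ∀ (n m : ℤ), ((n : ℝ) * ρ.1 + (m : ℝ), (n : ℝ) * ρ.2) ∈ Gc := by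
    intro n m
    refine hsub ⟨n, m, 0, ?_⟩
    ext <;> simp [zsmul_eq_mul]
  -- case split on T
  rcases T.dense_or_cyclic with hTd | ⟨a, ha⟩
  · -- T dense, hence T = ℝ
    have hTuniv : ∀ t : ℝ, ((0 : ℝ), t) ∈ Gc := by
      intro t
      have h1 : t ∈ closure (T : Set ℝ) := hTd t
      rwa [hTclosed.closure_eq] at h1
    intro p
    -- p = (p.1, p.2); horizontal density
    have hs : {x : ℝ × ℝ | x.2 = p.2 ∧ x ∈ Gc} ⊇ (fun a : ℝ => (a, p.2)) '' (A : Set ℝ) := by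
      rintro _ ⟨b, hb, rfl⟩
      refine ⟨rfl, ?_⟩
      obtain ⟨n, m, hnm⟩ := AddSubgroup.mem_closure_pair.1 hb
      rw [zsmul_eq_mul, zsmul_eq_mul, mul_one] at hnm
      have h2 := hAG n m
      have h3 := hTuniv (p.2 - (n : ℝ) * ρ.2)
      have h4 := add_mem h2 h3
      have h5 : ((n:ℝ) * ρ.1 + (m:ℝ), (n:ℝ) * ρ.2) + ((0:ℝ), p.2 - (n:ℝ)*ρ.2) = (b, p.2) := by
        ext <;> simp [hnm] <;> ring
      rwa [h5] at h4
    have hp1 : p ∈ closure ((fun a : ℝ => (a, p.2)) '' (A : Set ℝ)) := by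
      have hc : Continuous (fun a : ℝ => (a, p.2)) := continuous_id.prodMk continuous_const
      have h6 : p = (fun a : ℝ => (a, p.2)) p.1 := rfl
      rw [h6]
      exact (image_closure_subset_closure_image hc) ⟨p.1, hAdense p.1, rfl⟩
    have hp2 : p ∈ closure (Gc : Set (ℝ × ℝ)) :=
      closure_mono (fun x hx => (hs hx).2) hp1
    rwa [hGcclosed.closure_eq] at hp2
  · -- T cyclic: derive a contradiction with total irrationality
    exfalso
    rw [← AddSubgroup.zmultiples_eq_closure] at ha
    -- replace a by α := |a|
    have h1za : (1 : ℝ) ∈ AddSubgroup.zmultiples a := ha ▸ h1T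
    obtain ⟨k0, hk0⟩ := AddSubgroup.mem_zmultiples_iff.1 h1za
    have ha0 : a ≠ 0 := by
      rintro rfl
      rw [smul_zero] at hk0
      exact one_ne_zero hk0.symm
    set α := |a| with hα'
    have hα : 0 < α := abs_pos.2 ha0
    have hTα : T = AddSubgroup.zmultiples α := by
      rw [ha]
      ext t
      simp only [AddSubgroup.mem_zmultiples_iff]
      constructor
      · rintro ⟨k, rfl⟩
        rcases abs_cases a with ⟨h, _⟩ | ⟨h, _⟩
        · exact ⟨k, by rw [hα', h]⟩
        · exact ⟨-k, by rw [hα', h]; simp⟩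
      · rintro ⟨k, rfl⟩
        rcases abs_cases a with ⟨h, _⟩ | ⟨h, _⟩
        · exact ⟨k, by rw [hα', h]⟩
        · exact ⟨-k, by rw [hα', h]; simp⟩
    -- Claim 1 : vertical control near the fiber over 0
    have claim1 : ∀ ε > 0, ∃ δ > 0, ∀ p : ℝ × ℝ, p ∈ Gc → |p.1| < δ →
        ∃ t ∈ T, |p.2 - t| ≤ ε := by
      intro ε hε
      by_contra hcon
      push_neg at hcon
      have hseq : ∀ j : ℕ, ∃ p : ℝ × ℝ, p ∈ Gc ∧ |p.1| < 1/(j+1) ∧ ∀ t ∈ T, ε < |p.2 - t| := by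
        intro j
        obtain ⟨p, hp1, hp2, hp3⟩ := hcon (1/(j+1)) (by positivity)
        exact ⟨p, hp1, hp2, fun t ht => lt_of_not_ge (fun hle => by
          obtain ⟨t', ht', hle'⟩ := (by exact ⟨t, ht, hle⟩ : ∃ t' ∈ T, |p.2 - t'| ≤ ε)
          exact absurd hle' (not_le.2 (hp3 t' ht')))⟩
      choose p hp1 hp2 hp3 using hseq
      set q : ℕ → ℝ × ℝ := fun j => p j - ((0 : ℝ), (⌊(p j).2⌋ : ℝ)) with hq
      have hq1 : ∀ j, q j ∈ Gc := fun j => sub_mem (hp1 j) (hvert _)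
      have hqfst : ∀ j, (q j).1 = (p j).1 := fun j => sub_zero _
      have hqsnd : ∀ j, (q j).2 = (p j).2 - (⌊(p j).2⌋ : ℝ) := fun j => rfl
      have hq3 : ∀ j, ∀ t ∈ T, ε < |(q j).2 - t| := by
        intro j t ht
        have hmem : t + (⌊(p j).2⌋ : ℝ) ∈ T := add_mem ht (by
          have hz := zsmul_mem h1T ⌊(p j).2⌋
          have e : (⌊(p j).2⌋ : ℤ) • (1:ℝ) = ((⌊(p j).2⌋ : ℝ)) := by
            rw [zsmul_eq_mul, mul_one]
          rwa [e] at hz)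
        have := hp3 j _ hmem
        have he : (p j).2 - (t + (⌊(p j).2⌋ : ℝ)) = (q j).2 - t := by
          rw [hqsnd j]; ring
        rwa [he] at this
      have hK : IsCompact ((Icc (-1 : ℝ) 1) ×ˢ (Icc (0 : ℝ) 1)) := isCompact_Icc.prod isCompact_Icc
      have hmemK : ∀ j, q j ∈ (Icc (-1 : ℝ) 1) ×ˢ (Icc (0 : ℝ) 1) := by
        intro j
        constructor
        · have h7 : |(q j).1| < 1/(j+1) := by rw [hqfst]; exact hp2 j
          have h8 : (1:ℝ)/(j+1) ≤ 1 := by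
            rw [div_le_one (by positivity)]
            simp
          have := abs_le.1 (le_of_lt (lt_of_lt_of_le h7 h8))
          exact ⟨this.1, this.2⟩
        · rw [hqsnd]
          have e : (p j).2 - (⌊(p j).2⌋:ℝ) = Int.fract ((p j).2) := rfl
          rw [e]
          exact ⟨Int.fract_nonneg _, le_of_lt (Int.fract_lt_one _)⟩
      obtain ⟨L, hLK, φ, hφmono, hφtend⟩ := hK.tendsto_subseq hmemK
      have hLGc : L ∈ Gc := hGcclosed.mem_of_tendsto hφtend (Filter.Eventually.of_forall fun i => hq1 _)
      have hL1 : L.1 = 0 := by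
        have h1 : Filter.Tendsto (fun i => (q (φ i)).1) atTop (𝓝 L.1) :=
          ((continuous_fst.tendsto L).comp hφtend)
        have h2 : Filter.Tendsto (fun i => (q (φ i)).1) atTop (𝓝 0) := by
          apply squeeze_zero_norm (a := fun i : ℕ => 1/((i:ℝ)+1))
          · intro i
            have h7 : |(q (φ i)).1| < 1/((φ i : ℝ)+1) := by rw [hqfst]; exact hp2 (φ i)
            have h8 : (1:ℝ)/((φ i : ℝ)+1) ≤ 1/((i:ℝ)+1) := by
              apply div_le_div_of_nonneg_left one_pos.le (by positivity)
              have h10 : i ≤ φ i := hφmono.le_apply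
              push_cast
              have : (i:ℝ) ≤ (φ i : ℝ) := by exact_mod_cast h10
              linarith
            exact le_of_lt (lt_of_lt_of_le h7 h8)
          · exact tendsto_one_div_add_atTop_nhds_zero_nat
        exact tendsto_nhds_unique h1 h2
      have hL2T : L.2 ∈ T := by
        rw [hTmem]
        have h9 : ((0:ℝ), L.2) = L := by
          ext
          · exact hL1.symm
          · rfl
        rwa [h9]
      have h3 : ∀ᶠ i in atTop, |(q (φ i)).2 - L.2| < ε := by
        have h1 : Filter.Tendsto (fun i => (q (φ i)).2) atTop (𝓝 L.2) :=
          ((continuous_snd.tendsto L).comp hφtend)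
        have h2 : Filter.Tendsto (fun i => |(q (φ i)).2 - L.2|) atTop (𝓝 0) := by
          have h11 := (h1.sub (tendsto_const_nhds (x := L.2))).abs
          simpa using h11
        exact h2.eventually (gt_mem_nhds hε)
      obtain ⟨i, hi⟩ := h3.exists
      exact absurd hi (not_lt.2 (le_of_lt (hq3 (φ i) L.2 hL2T)))
    -- uniqueness of representation over A
    have huniq : ∀ n m n' m' : ℤ, (n:ℝ) * ρ.1 + (m:ℝ) = (n':ℝ) * ρ.1 + (m':ℝ) →
        n = n' ∧ m = m' := by
      intro n m n' m' h
      rcases eq_or_ne n n' with rfl | hne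
      · have : (m:ℝ) = (m':ℝ) := by linarith
        exact ⟨rfl, by exact_mod_cast this⟩
      · exfalso
        have hnn' : ((n - n' : ℤ):ℝ) ≠ 0 := by
          push_cast
          intro hc
          exact hne (by exact_mod_cast (by linarith : (n:ℝ) = (n':ℝ)))
        refine hirr1 ⟨((m' - m : ℤ):ℚ) / ((n - n' : ℤ):ℚ), ?_⟩
        have hq0 : ((n - n' : ℤ):ℚ) ≠ 0 := by
          intro hc
          apply hnn'
          exact_mod_cast congrArg (fun q : ℚ => (q : ℝ)) hc
        push_cast
        rw [div_eq_iff (by exact_mod_cast hq0)]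
        push_cast at hnn' ⊢
        ring_nf
        ring_nf at h
        nlinarith [h]
    -- membership data for A
    have hex : ∀ x : A, ∃ nm : ℤ × ℤ, (nm.1:ℝ) * ρ.1 + (nm.2:ℝ) = (x:ℝ) := by
      intro x
      obtain ⟨n, m, h⟩ := AddSubgroup.mem_closure_pair.1 x.2
      exact ⟨(n, m), by rw [zsmul_eq_mul, zsmul_eq_mul, mul_one] at h; exact h⟩
    choose nm hnm using hex
    set χfun : A → AddCircle α := fun x => (((nm x).1 : ℝ) * ρ.2 : ℝ) with hχfun
    have hNadd : ∀ x y : A, (nm (x+y)).1 = (nm x).1 + (nm y).1 := by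
      intro x y
      have h1 := hnm x
      have h2 := hnm y
      have h3 := hnm (x+y)
      have hco : ((x + y : A) : ℝ) = (x:ℝ) + (y:ℝ) := rfl
      rw [hco] at h3
      have h4 : (((nm x).1 + (nm y).1 : ℤ):ℝ) * ρ.1 + (((nm x).2 + (nm y).2 : ℤ):ℝ)
          = (x:ℝ) + (y:ℝ) := by push_cast; push_cast at h1 h2; linarith
      exact ((huniq _ _ _ _ (h3.trans h4.symm)).1)
    have hχadd : ∀ x y : A, χfun (x + y) = χfun x + χfun y := by
      intro x y
      simp only [hχfun]
      rw [hNadd x y]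
      push_cast
      rw [add_mul, QuotientAddGroup.mk_add]
    set χ : A →+ AddCircle α := AddMonoidHom.mk' χfun hχadd with hχ
    have hmemA1 : (1:ℝ) ∈ A := AddSubgroup.subset_closure (by simp)
    have hmemAρ : ρ.1 ∈ A := AddSubgroup.subset_closure (by simp)
    have hN1 : (nm ⟨1, hmemA1⟩).1 = 0 := by
      have h1 := hnm ⟨1, hmemA1⟩
      have h2 : ((0:ℤ):ℝ) * ρ.1 + ((1:ℤ):ℝ) = ((⟨1, hmemA1⟩ : A) : ℝ) := by norm_num
      exact (huniq _ _ _ _ (h1.trans h2.symm)).1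
    have hNρ : (nm ⟨ρ.1, hmemAρ⟩).1 = 1 := by
      have h1 := hnm ⟨ρ.1, hmemAρ⟩
      have h2 : ((1:ℤ):ℝ) * ρ.1 + ((0:ℤ):ℝ) = ((⟨ρ.1, hmemAρ⟩ : A) : ℝ) := by norm_num
      exact (huniq _ _ _ _ (h1.trans h2.symm)).1
    have hχ1 : χ ⟨1, hmemA1⟩ = 0 := by
      show χfun _ = 0
      simp only [hχfun, hN1]
      norm_num
    have hχρ : χ ⟨ρ.1, hmemAρ⟩ = (ρ.2 : AddCircle α) := by
      show χfun _ = _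
      simp only [hχfun, hNρ]
      norm_num
    -- continuity of χ at 0
    have hχcont : ContinuousAt χ 0 := by
      rw [ContinuousAt, map_zero]
      intro U hU
      have hU' : ((QuotientAddGroup.mk : ℝ → AddCircle α) ⁻¹' U) ∈ 𝓝 (0:ℝ) := by
        have hcm : Continuous (QuotientAddGroup.mk : ℝ → AddCircle α) :=
          QuotientAddGroup.isOpenQuotientMap_mk.continuous
        have : (QuotientAddGroup.mk : ℝ → AddCircle α) 0 = 0 := rfl
        exact hcm.continuousAt.preimage_mem_nhds (by rwa [this])
      obtain ⟨ε, hεpos, hεsub⟩ := Metric.mem_nhds_iff.1 hU'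
      obtain ⟨δ, hδpos, hδ⟩ := claim1 (ε/2) (by positivity)
      rw [Filter.mem_map, Metric.mem_nhds_iff]
      refine ⟨δ, hδpos, fun x hx => ?_⟩
      have hx' : |(x:ℝ)| < δ := by
        have h5 : dist x (0:A) < δ := hx
        rw [Subtype.dist_eq, Real.dist_eq] at h5
        simpa using h5
      have hpt : ((x:ℝ), ((nm x).1 : ℝ) * ρ.2) ∈ Gc := by
        have h6 := hAG (nm x).1 (nm x).2
        have h7 : (((nm x).1:ℝ) * ρ.1 + ((nm x).2:ℝ), ((nm x).1:ℝ) * ρ.2) = ((x:ℝ), ((nm x).1 : ℝ) * ρ.2) := by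
          rw [hnm x]
        rwa [h7] at h6
      obtain ⟨t, htT, hterr⟩ := hδ _ hpt hx'
      have ht0 : ((t:ℝ) : AddCircle α) = 0 := by
        rw [AddCircle.coe_eq_zero_iff]
        rwa [hTα, AddSubgroup.mem_zmultiples_iff] at htT
      have hval : χ x = ((((nm x).1 : ℝ) * ρ.2 - t : ℝ) : AddCircle α) := by
        show χfun x = _
        simp only [hχfun]
        rw [QuotientAddGroup.mk_sub, ht0, sub_zero]
      show χ x ∈ U
      rw [hval]
      apply hεsub
      rw [Metric.mem_ball, Real.dist_eq, sub_zero]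
      exact lt_of_le_of_lt hterr (by linarith)
    haveI : Fact (0 < α) := ⟨hα⟩
    have hχuc : UniformContinuous χ := uniformContinuous_of_continuousAt_zero χ hχcont
    have hUI : IsUniformInducing ((↑) : A → ℝ) := isUniformEmbedding_subtype_val.isUniformInducing
    have hDR : DenseRange ((↑) : A → ℝ) := by
      rw [DenseRange, Subtype.range_coe]
      exact hAdense
    set ψf : ℝ → AddCircle α := (hUI.isDenseInducing hDR).extend χ with hψf
    have hψuc : UniformContinuous ψf := uniformContinuous_uniformly_extend hUI hDR hχuc
    have hψe : ∀ x : A, ψf (x:ℝ) = χ x := fun x => uniformly_extend_of_ind hUI hDR hχuc x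
    have hψadd : ∀ x y : ℝ, ψf (x + y) = ψf x + ψf y := by
      have h1 : Continuous (fun p : ℝ × ℝ => ψf (p.1 + p.2)) :=
        hψuc.continuous.comp (continuous_fst.add continuous_snd)
      have h2 : Continuous (fun p : ℝ × ℝ => ψf p.1 + ψf p.2) :=
        ((hψuc.continuous.comp continuous_fst).add (hψuc.continuous.comp continuous_snd))
      have hds : Dense ((A : Set ℝ) ×ˢ (A : Set ℝ)) := hAdense.prod hAdense
      have heq : Set.EqOn (fun p : ℝ × ℝ => ψf (p.1 + p.2)) (fun p : ℝ × ℝ => ψf p.1 + ψf p.2)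
          ((A : Set ℝ) ×ˢ (A : Set ℝ)) := by
        rintro ⟨x, y⟩ ⟨hxA, hyA⟩
        have e1 : ψf (x + y) = χ (⟨x, hxA⟩ + ⟨y, hyA⟩) := hψe (⟨x, hxA⟩ + ⟨y, hyA⟩)
        have e2 : ψf x = χ ⟨x, hxA⟩ := hψe ⟨x, hxA⟩
        have e3 : ψf y = χ ⟨y, hyA⟩ := hψe ⟨y, hyA⟩
        show ψf (x + y) = ψf x + ψf y
        rw [e1, e2, e3, map_add]
      have := Continuous.ext_on hds h1 h2 heq
      intro x y
      exact congrFun this (x, y)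
    set ψ : ℝ →+ AddCircle α := AddMonoidHom.mk' ψf hψadd with hψ
    obtain ⟨c, hc⟩ := hom_real_addCircle hα ψ hψuc.continuous
    -- evaluate
    have e1 : ((c * 1 : ℝ) : AddCircle α) = 0 := by
      rw [← hc 1]
      show ψf 1 = 0
      have h8 : ((⟨1, hmemA1⟩ : A) : ℝ) = 1 := rfl
      rw [← h8, hψe ⟨1, hmemA1⟩, hχ1]
    have e2 : ((c * ρ.1 : ℝ) : AddCircle α) = (ρ.2 : AddCircle α) := by
      rw [← hc ρ.1]
      show ψf ρ.1 = _
      have h8 : ((⟨ρ.1, hmemAρ⟩ : A) : ℝ) = ρ.1 := rfl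
      rw [← h8, hψe ⟨ρ.1, hmemAρ⟩, hχρ]
    obtain ⟨j, hj⟩ := (AddCircle.coe_eq_zero_iff α).1 (by rw [mul_one] at e1; exact e1)
    have e3 : ((c * ρ.1 - ρ.2 : ℝ) : AddCircle α) = 0 := by
      rw [QuotientAddGroup.mk_sub, e2, sub_self]
    obtain ⟨i, hi⟩ := (AddCircle.coe_eq_zero_iff α).1 e3
    have h1Tα : (1:ℝ) ∈ AddSubgroup.zmultiples α := by rw [← hTα]; exact h1T
    obtain ⟨k, hk⟩ := AddSubgroup.mem_zmultiples_iff.1 h1Tα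
    rw [zsmul_eq_mul] at hj hi hk
    -- derive the rational relation
    have hrel : ((-i : ℤ):ℝ) + ((j : ℤ):ℝ) * ρ.1 + ((-k : ℤ):ℝ) * ρ.2 = 0 := by
      push_cast
      linear_combination (-(k:ℝ)) * hi + (i:ℝ) * hk + ρ.1 * (k:ℝ) * hj - ρ.1 * (j:ℝ) * hk
    have := hirr ((-i : ℤ):ℚ) ((j : ℤ):ℚ) ((-k : ℤ):ℚ) (by push_cast; push_cast at hrel; linarith)
    have hk0' : ((-k : ℤ):ℚ) = 0 := this.2.2
    have hkz : k = 0 := by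
      have : (-k : ℤ) = 0 := by exact_mod_cast hk0'
      omega
    rw [hkz] at hk
    norm_num at hk


end Jaeger
namespace Jaeger

theorem dense_orbit_rot (ρ : ℝ × ℝ) (hirr : TotallyIrrational ρ) :
    Dense (Set.range fun n : ℤ => n • proj ρ) := by
  have hd := dense_latG ρ hirr
  intro z
  obtain ⟨x, rfl⟩ := surjective_proj z
  have h1 : proj x ∈ proj '' (closure ((latG ρ : AddSubgroup (ℝ×ℝ)) : Set (ℝ×ℝ))) := ⟨x, hd x, rfl⟩
  have h2 : proj '' closure ((latG ρ : AddSubgroup (ℝ×ℝ)) : Set (ℝ×ℝ))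
      ⊆ closure (proj '' ((latG ρ : AddSubgroup (ℝ×ℝ)) : Set (ℝ×ℝ))) :=
    image_closure_subset_closure_image continuous_proj
  have h3 : proj '' ((latG ρ : AddSubgroup (ℝ×ℝ)) : Set (ℝ×ℝ))
      ⊆ Set.range fun n : ℤ => n • proj ρ := by
    rintro _ ⟨y, ⟨n, m1, m2, rfl⟩, rfl⟩
    have e : proj (n • ρ + ((m1:ℝ),(m2:ℝ))) = n • proj ρ := by
      rw [proj_add, proj_zsmul]
      have h0 : proj (((m1:ℝ), (m2:ℝ))) = 0 := proj_int (m1, m2)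
      rw [h0, add_zero]
    exact ⟨n, e.symm⟩
  exact closure_mono h3 (h2 h1)

/-- Gottschalk–Hedlund for `T2` with values in `ℝ × ℝ`. -/
theorem gottschalk_hedlund (f : T2 ≃ₜ T2)
    (hmin : ∀ z : T2, Dense (Set.range fun n : ℤ => hIter f n z))
    (φ : T2 → ℝ × ℝ) (hφ : Continuous φ) (C : ℝ)
    (hC : ∀ (z : T2) (n : ℕ), ‖∑ k ∈ Finset.range n, φ ((⇑f)^[k] z)‖ ≤ C) :
    ∃ u : T2 → ℝ × ℝ, Continuous u ∧ ∀ z, u (f z) = u z + φ z := by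
  classical
  -- the skew product
  set Tm : (T2 × (ℝ × ℝ)) ≃ₜ (T2 × (ℝ × ℝ)) :=
    { toFun := fun x => (f x.1, x.2 + φ x.1)
      invFun := fun x => (f.symm x.1, x.2 - φ (f.symm x.1))
      left_inv := by intro x; simp
      right_inv := by intro x; simp
      continuous_toFun := ((f.continuous.comp continuous_fst).prodMk
        (continuous_snd.add (hφ.comp continuous_fst)))
      continuous_invFun := ((f.symm.continuous.comp continuous_fst).prodMk
        (continuous_snd.sub (hφ.comp (f.symm.continuous.comp continuous_fst)))) } with hTm
  have hTmfst : ∀ x : T2 × (ℝ × ℝ), (Tm x).1 = f x.1 := fun _ => rfl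
  have hiter : ∀ (n : ℕ) (z : T2) (v : ℝ × ℝ),
      (⇑Tm)^[n] (z, v) = ((⇑f)^[n] z, v + ∑ k ∈ Finset.range n, φ ((⇑f)^[k] z)) := by
    intro n
    induction n with
    | zero => intro z v; simp
    | succ n ih =>
      intro z v
      rw [Function.iterate_succ_apply', ih, Function.iterate_succ_apply']
      show (f ((⇑f)^[n] z), (v + ∑ k ∈ Finset.range n, φ ((⇑f)^[k] z)) + φ ((⇑f)^[n] z)) = _
      rw [Finset.sum_range_succ]
      ext <;> simp <;> ring
  -- base point and orbit closure
  obtain ⟨z₀⟩ : Nonempty T2 := ⟨proj (0, 0)⟩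
  set Ω : Set (T2 × (ℝ × ℝ)) := closure (Set.range fun n : ℕ => (⇑Tm)^[n] (z₀, 0)) with hΩ
  have hΩsub : Ω ⊆ Set.univ ×ˢ Metric.closedBall 0 C := by
    apply closure_minimal
    · rintro _ ⟨n, rfl⟩
      show (⇑Tm)^[n] (z₀, 0) ∈ _
      rw [hiter n z₀ 0]
      refine ⟨trivial, ?_⟩
      rw [Metric.mem_closedBall, dist_zero_right, zero_add]
      exact hC z₀ n
    · exact isClosed_univ.prod Metric.isClosed_closedBall
  have hΩcompact : IsCompact Ω :=
    (isCompact_univ.prod (isCompact_closedBall 0 C)).of_isClosed_subset isClosed_closure hΩsub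
  have hΩinv : Tm '' Ω ⊆ Ω := by
    rw [hΩ]
    calc Tm '' closure (Set.range fun n : ℕ => (⇑Tm)^[n] (z₀, 0))
        ⊆ closure (Tm '' Set.range fun n : ℕ => (⇑Tm)^[n] (z₀, 0)) :=
          image_closure_subset_closure_image Tm.continuous
    _ ⊆ closure (Set.range fun n : ℕ => (⇑Tm)^[n] (z₀, 0)) := by
          apply closure_mono
          rintro _ ⟨_, ⟨n, rfl⟩, rfl⟩
          exact ⟨n + 1, by show (⇑Tm)^[n+1] (z₀, 0) = Tm ((⇑Tm)^[n] (z₀, 0))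
                           rw [Function.iterate_succ_apply']⟩
  have hΩne : Ω.Nonempty := ⟨(z₀, 0), subset_closure ⟨0, rfl⟩⟩
  -- Zorn: find a minimal invariant compact subset
  set 𝒞 : Set (Set (T2 × (ℝ × ℝ))) :=
    {M | M ⊆ Ω ∧ M.Nonempty ∧ IsClosed M ∧ Tm '' M ⊆ M} with h𝒞
  obtain ⟨M, -, hMminimal⟩ : ∃ M ⊆ Ω, Minimal (· ∈ 𝒞) M := by
    apply zorn_superset_nonempty
    · intro c hc𝒞 hchain hcne
      refine ⟨⋂₀ c, ⟨?_, ?_, ?_, ?_⟩, fun s hs => sInter_subset_of_mem hs⟩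
      · obtain ⟨s, hs⟩ := hcne
        exact (sInter_subset_of_mem hs).trans (hc𝒞 hs).1
      · haveI : Nonempty c := hcne.to_subtype
        apply IsCompact.nonempty_sInter_of_directed_nonempty_isCompact_isClosed
        · exact IsChain.directedOn (hchain.symm)
        · exact fun s hs => (hc𝒞 hs).2.1
        · exact fun s hs => hΩcompact.of_isClosed_subset (hc𝒞 hs).2.2.1 (hc𝒞 hs).1
        · exact fun s hs => (hc𝒞 hs).2.2.1
      · exact isClosed_sInter fun s hs => (hc𝒞 hs).2.2.1
      · rintro _ ⟨y, hy, rfl⟩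
        exact mem_sInter.2 fun s hs => (hc𝒞 hs).2.2.2 ⟨y, mem_sInter.1 hy s hs, rfl⟩
    · exact (⟨subset_refl _, hΩne, isClosed_closure, hΩinv⟩ : Ω ∈ 𝒞)
  have hM𝒞 : M ∈ 𝒞 := hMminimal.prop
  have hMmin : ∀ M' ∈ 𝒞, M' ⊆ M → M' = M :=
    fun M' h1 h2 => subset_antisymm h2 (hMminimal.2 h1 h2)
  obtain ⟨hMΩ, hMne, hMclosed, hMinv⟩ := hM𝒞
  have hMcompact : IsCompact M := hΩcompact.of_isClosed_subset hMclosed hMΩ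
  have hMeq : Tm '' M = M := by
    apply hMmin
    · exact ⟨hMinv.trans hMΩ, hMne.image _, (hMcompact.image Tm.continuous).isClosed,
        Set.image_mono hMinv⟩
    · exact hMinv
  set Mz : Set T2 := Prod.fst '' M with hMz
  have hMzne : Mz.Nonempty := hMne.image _
  have hMzclosed : IsClosed Mz := (hMcompact.image continuous_fst).isClosed
  have hMzf : f '' Mz = Mz := by
    have h1 : f '' Mz = Prod.fst '' (Tm '' M) := by
      rw [hMz, ← Set.image_comp, ← Set.image_comp]
      rfl
    rw [h1, hMeq]
  have hMzuniv : Mz = Set.univ := by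
    obtain ⟨z1, hz1⟩ := hMzne
    have hfwd : ∀ n : ℕ, (⇑f)^[n] z1 ∈ Mz := by
      intro n
      induction n with
      | zero => simpa
      | succ n ih =>
        rw [Function.iterate_succ_apply', ← hMzf]
        exact ⟨_, ih, rfl⟩
    have hbwd : ∀ n : ℕ, (⇑f.symm)^[n] z1 ∈ Mz := by
      intro n
      induction n with
      | zero => simpa
      | succ n ih =>
        rw [Function.iterate_succ_apply']
        have ih' : (⇑f.symm)^[n] z1 ∈ f '' Mz := by rw [hMzf]; exact ih
        obtain ⟨w, hw, hweq⟩ := ih'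
        have h2 : f.symm ((⇑f.symm)^[n] z1) = w := by rw [← hweq]; simp
        rwa [h2]
    have horb : ∀ n : ℤ, hIter f n z1 ∈ Mz := by
      intro n
      cases n with
      | ofNat n => exact hfwd n
      | negSucc n => exact hbwd (n+1)
    have hsub2 : Set.range (fun n : ℤ => hIter f n z1) ⊆ Mz := by
      rintro _ ⟨n, rfl⟩; exact horb n
    have h2 : Set.univ ⊆ closure Mz := by
      rw [← (hmin z1).closure_eq]
      exact closure_mono hsub2
    rw [hMzclosed.closure_eq] at h2
    exact Set.eq_univ_of_univ_subset h2
  -- graph property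
  have hgraph : ∀ z v₁ v₂, (z, v₁) ∈ M → (z, v₂) ∈ M → v₁ = v₂ := by
    intro z v₁ v₂ h1 h2
    by_contra hne
    set w := v₂ - v₁ with hw
    have hw0 : w ≠ 0 := sub_ne_zero.2 (Ne.symm hne)
    set τ : T2 × (ℝ×ℝ) → T2 × (ℝ×ℝ) := fun x => (x.1, x.2 + w) with hτ
    have hτcont : Continuous τ := continuous_fst.prodMk (continuous_snd.add continuous_const)
    have hcomm : ∀ x, Tm (τ x) = τ (Tm x) := by
      intro x
      show (f x.1, (x.2 + w) + φ x.1) = (f x.1, (x.2 + φ x.1) + w)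
      rw [add_right_comm]
    have hτM : M ∩ τ '' M ∈ 𝒞 := by
      refine ⟨Set.inter_subset_left.trans hMΩ, ⟨(z, v₂), h2, (z, v₁), h1,
        (by show (z, v₁ + w) = (z, v₂); rw [hw]; congr 1; abel)⟩,
        hMclosed.inter (hMcompact.image hτcont).isClosed, ?_⟩
      rintro _ ⟨x, ⟨hxM, y, hyM, rfl⟩, rfl⟩
      refine ⟨hMinv ⟨_, hxM, rfl⟩, Tm y, hMinv ⟨y, hyM, rfl⟩, (hcomm y).symm⟩
    have hMsub : M ⊆ τ '' M := by
      have h3 := hMmin _ hτM Set.inter_subset_left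
      intro x hx
      rw [← h3] at hx
      exact hx.2
    have hiterw : ∀ (n : ℕ) (x : T2 × (ℝ×ℝ)), x ∈ M → (x.1, x.2 - (n:ℝ) • w) ∈ M := by
      intro n
      induction n with
      | zero => intro x hx; simpa using hx
      | succ n ih =>
        intro x hx
        obtain ⟨y, hyM, hyeq⟩ := hMsub hx
        have hy1 : y.1 = x.1 := by rw [← hyeq]
        have hy2 : y.2 = x.2 - w := by rw [← hyeq]; show y.2 = y.2 + w - w; ring
        have h3 := ih y hyM
        have h4 : (y.1, y.2 - (n:ℝ) • w) = (x.1, x.2 - ((n:ℕ)+1:ℝ) • w) := by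
          rw [hy1, hy2]
          congr 1
          rw [add_smul, one_smul]
          abel
        rw [h4] at h3
        have h5 : (((n+1:ℕ)):ℝ) = ((n:ℕ):ℝ) + 1 := by push_cast; ring
        rw [h5]
        exact h3
    have hbound : ∀ n : ℕ, ‖v₁ - (n:ℝ) • w‖ ≤ C := by
      intro n
      have h4 := hΩsub (hMΩ (hiterw n (z, v₁) h1))
      have h5 := h4.2
      rw [Metric.mem_closedBall, dist_zero_right] at h5
      exact h5
    obtain ⟨n, hn⟩ := exists_nat_gt ((C + ‖v₁‖)/‖w‖)
    have hwpos : 0 < ‖w‖ := norm_pos_iff.2 hw0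
    have h6 : ‖(n:ℝ) • w‖ - ‖v₁‖ ≤ ‖v₁ - (n:ℝ) • w‖ := by
      rw [norm_sub_rev]
      exact (norm_sub_norm_le _ _)
    rw [norm_smul, Real.norm_natCast] at h6
    rw [div_lt_iff₀ hwpos] at hn
    linarith [hbound n]
  have hexu : ∀ z : T2, ∃ v, (z, v) ∈ M := by
    intro z
    have h7 : z ∈ Mz := by rw [hMzuniv]; trivial
    obtain ⟨x, hxM, hx1⟩ := h7
    exact ⟨x.2, by rw [← hx1]; rwa [Prod.mk.eta]⟩
  haveI : CompactSpace M := isCompact_iff_compactSpace.1 hMcompact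
  have hbij : Function.Bijective (fun m : M => (m : T2 × (ℝ×ℝ)).1) := by
    constructor
    · rintro ⟨x, hx⟩ ⟨y, hy⟩ hxy
      simp only at hxy
      apply Subtype.ext
      have h8 : x.2 = y.2 := by
        apply hgraph x.1 x.2 y.2 (by rwa [Prod.mk.eta])
        rw [hxy]
        rwa [Prod.mk.eta]
      exact Prod.ext hxy h8
    · intro z
      obtain ⟨v, hv⟩ := hexu z
      exact ⟨⟨(z, v), hv⟩, rfl⟩
  set e : M ≃ T2 := Equiv.ofBijective _ hbij with he
  have hecont : Continuous e := continuous_fst.comp continuous_subtype_val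
  set E : M ≃ₜ T2 := hecont.homeoOfEquivCompactToT2 with hE
  set u : T2 → ℝ × ℝ := fun z => ((E.symm z : M) : T2 × (ℝ×ℝ)).2 with hu
  have hucont : Continuous u :=
    continuous_snd.comp (continuous_subtype_val.comp E.symm.continuous)
  have huM : ∀ z, (z, u z) ∈ M := by
    intro z
    have h7 : ((E.symm z : M) : T2 × (ℝ×ℝ)).1 = z := E.apply_symm_apply z
    have h8 := (E.symm z).2
    have h9 : ((E.symm z : M) : T2 × (ℝ×ℝ)) = (z, u z) := Prod.ext h7 rfl
    rwa [h9] at h8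
  refine ⟨u, hucont, fun z => ?_⟩
  have h9 : (f z, u z + φ z) ∈ M := hMinv ⟨(z, u z), huM z, rfl⟩
  exact hgraph (f z) (u (f z)) (u z + φ z) (huM (f z)) h9


end Jaeger
/-- **Jäger.**  A minimal pseudo-rotation of 𝕋² with bounded mean motion and totally
irrational rotation vector `ρ` is semiconjugate to the rigid rotation `R_ρ`. -/
theorem minimal_pseudo_rotation_semiconjugate
    (f : T2 ≃ₜ T2) (F : (ℝ × ℝ) ≃ₜ (ℝ × ℝ)) (hF : IsLift ⇑f ⇑F)
    (ρ : ℝ × ℝ) (hρ : IsPseudoRotation ⇑F ρ)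
    (hbmm : BoundedMeanMotion F ρ)
    (hirr : TotallyIrrational ρ)
    (hmin : ∀ z : T2, Dense (Set.range fun n : ℤ => hIter f n z)) :
    ∃ h : T2 → T2, Continuous h ∧ Function.Surjective h ∧
      ∀ z : T2, h (f z) = Rrot ρ (h z) := by
  classical
  obtain ⟨C, hC⟩ := hbmm
  set Φ : ℝ × ℝ → ℝ × ℝ := fun x => F x - x - ρ with hΦ
  have hΦper : ∀ (x : ℝ × ℝ) (v : ℤ × ℤ), Φ (x + ((v.1:ℝ), (v.2:ℝ))) = Φ x := by
    intro x v
    show F (x + ((v.1:ℝ), (v.2:ℝ))) - (x + ((v.1:ℝ), (v.2:ℝ))) - ρ = F x - x - ρ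
    rw [hF.2 x v]
    abel
  have hΦcong : ∀ x y, proj x = proj y → Φ x = Φ y := by
    intro x y h
    obtain ⟨v, rfl⟩ := Jaeger.proj_eq_iff h
    exact (hΦper x v).symm
  set sec : T2 → ℝ × ℝ := Function.surjInv Jaeger.surjective_proj with hsec
  have hsecp : ∀ z, proj (sec z) = z := fun z => Function.surjInv_eq Jaeger.surjective_proj z
  set φ : T2 → ℝ × ℝ := fun z => Φ (sec z) with hφdef
  have hφproj : ∀ x, φ (proj x) = Φ x := fun x => hΦcong _ _ (hsecp (proj x))
  have hΦcont : Continuous Φ := (F.continuous.sub continuous_id).sub continuous_const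
  have hφcont : Continuous φ := by
    rw [Jaeger.isOpenQuotientMap_proj.isQuotientMap.continuous_iff]
    have e : φ ∘ proj = Φ := funext hφproj
    rw [e]
    exact hΦcont
  have hlift : ∀ (n : ℕ) (x : ℝ × ℝ), proj ((⇑F)^[n] x) = (⇑f)^[n] (proj x) := by
    intro n
    induction n with
    | zero => intro x; rfl
    | succ n ih =>
      intro x
      rw [Function.iterate_succ_apply', Function.iterate_succ_apply', hF.1, ih]
  have hsum : ∀ (n : ℕ) (x : ℝ × ℝ),
      ∑ k ∈ Finset.range n, φ ((⇑f)^[k] (proj x)) = (⇑F)^[n] x - x - (n:ℝ) • ρ := by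
    intro n x
    induction n with
    | zero => simp
    | succ n ih =>
      rw [Finset.sum_range_succ, ih, ← hlift, hφproj]
      show (⇑F)^[n] x - x - (n:ℝ) • ρ + (F ((⇑F)^[n] x) - (⇑F)^[n] x - ρ) = _
      rw [Function.iterate_succ_apply']
      push_cast
      rw [add_smul, one_smul]
      abel
  have hCn : ∀ (z : T2) (n : ℕ), ‖∑ k ∈ Finset.range n, φ ((⇑f)^[k] z)‖ ≤ C := by
    intro z n
    obtain ⟨x, rfl⟩ := Jaeger.surjective_proj z
    rw [hsum n x]
    have h1 := hC x (n : ℤ)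
    have h2 : hIter F ((n:ℕ):ℤ) x = (⇑F)^[n] x := rfl
    rw [h2] at h1
    have h3 : (((n:ℕ):ℤ):ℝ) = ((n:ℕ):ℝ) := by push_cast; ring
    rwa [h3] at h1
  obtain ⟨u, hucont, hu⟩ := Jaeger.gottschalk_hedlund f hmin φ hφcont C hCn
  set h : T2 → T2 := fun z => z - proj (u z) with hh
  have hhcont : Continuous h := continuous_id.sub (Jaeger.continuous_proj.comp hucont)
  have hRrot : ∀ w : T2, Rrot ρ w = w + proj ρ := fun w => rfl
  have hsemi : ∀ z, h (f z) = Rrot ρ (h z) := by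
    intro z
    obtain ⟨x, rfl⟩ := Jaeger.surjective_proj z
    rw [hRrot]
    show f (proj x) - proj (u (f (proj x))) = (proj x - proj (u (proj x))) + proj ρ
    rw [hu (proj x), ← hF.1 x, Jaeger.proj_add, hφproj x]
    have e : F x = x + ρ + Φ x := by
      show F x = x + ρ + (F x - x - ρ)
      abel
    rw [e, Jaeger.proj_add, Jaeger.proj_add]
    abel
  set K : Set T2 := Set.range h with hK
  have hKcomp : IsCompact K := isCompact_range hhcont
  have hKclosed : IsClosed K := hKcomp.isClosed
  have hfwd : ∀ y ∈ K, y + proj ρ ∈ K := by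
    rintro _ ⟨z, rfl⟩
    exact ⟨f z, by rw [hsemi z, hRrot]⟩
  have hbwd : ∀ y ∈ K, y - proj ρ ∈ K := by
    rintro _ ⟨z, rfl⟩
    obtain ⟨z', rfl⟩ := f.surjective z
    refine ⟨z', ?_⟩
    rw [show h (f z') = Rrot ρ (h z') from hsemi z', hRrot]
    abel
  have hzsmul : ∀ (n : ℤ), ∀ y ∈ K, y + n • proj ρ ∈ K := by
    intro n
    induction n using Int.induction_on with
    | zero => intro y hy; simpa using hy
    | succ i ih =>
      intro y hy
      have h6 := hfwd _ (ih y hy)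
      have e : (y + (i:ℤ) • proj ρ) + proj ρ = y + ((i:ℤ)+1) • proj ρ := by
        rw [add_smul, one_smul]; abel
      rwa [e] at h6
    | pred i ih =>
      intro y hy
      have h6 := hbwd _ (ih y hy)
      have e : (y + (-(i:ℤ)) • proj ρ) - proj ρ = y + (-(i:ℤ)-1) • proj ρ := by
        rw [sub_smul, one_smul]; abel
      rwa [e] at h6
  have hne : Nonempty T2 := ⟨proj (0, 0)⟩
  obtain ⟨z₀v⟩ := hne
  have hk₀ : h z₀v ∈ K := ⟨z₀v, rfl⟩
  have hdense : Dense (Set.range fun n : ℤ => h z₀v + n • proj ρ) := by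
    have hd := Jaeger.dense_orbit_rot ρ hirr
    intro y
    have h1 : y - h z₀v ∈ closure (Set.range fun n : ℤ => n • proj ρ) := hd _
    have h2 : Continuous (fun w : T2 => h z₀v + w) := continuous_const.add continuous_id
    have h3 : y = h z₀v + (y - h z₀v) := by abel
    have h4 : y ∈ (fun w => h z₀v + w) '' closure (Set.range fun n : ℤ => n • proj ρ) :=
      ⟨_, h1, h3.symm⟩
    have h5 := image_closure_subset_closure_image h2 h4
    refine closure_mono ?_ h5
    rintro _ ⟨_, ⟨n, rfl⟩, rfl⟩
    exact ⟨n, rfl⟩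
  have hKuniv : K = Set.univ := by
    apply Set.eq_univ_of_univ_subset
    have h5 : Set.range (fun n : ℤ => h z₀v + n • proj ρ) ⊆ K := by
      rintro _ ⟨n, rfl⟩
      exact hzsmul n _ hk₀
    calc Set.univ = closure (Set.range fun n : ℤ => h z₀v + n • proj ρ) := hdense.closure_eq.symm
    _ ⊆ closure K := closure_mono h5
    _ = K := hKclosed.closure_eq
  have hsurj : Function.Surjective h := fun y => by
    have : y ∈ K := by rw [hKuniv]; trivial
    exact this
  exact ⟨h, hhcont, hsurj, hsemi⟩
end
end

section
/- Let F : ℝ² → ℝ² be a homeomorphism with F(z+v) = F(z)+v for all v ∈ ℤ², let ρ = (ρ₁,ρ₂) ∈ ℝ², and suppose there is C > 0 such that |π₁(Fⁿ(z) − z) − nρ₁| ≤ C for all z ∈ ℝ² and all n ∈ ℤ, where π₁ is the first coordinate projection. Then the function H(z) = sup_{n∈ℤ} (π₁(Fⁿ(z)) − nρ₁) is finite for every z (indeed |H(z) − π₁(z)| ≤ C), and satisfies H(F(z)) = H(z) + ρ₁, H(z+(1,0)) = H(z) + 1, and H(z+(0,1)) = H(z) for all z ∈ ℝ². -/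
open Filter Topology Set Function

noncomputable section

lemma hIter_eq_pow {X : Type*} [TopologicalSpace X] (f : X ≃ₜ X) (n : ℤ) :
    hIter f n = ⇑(f.toEquiv ^ n) := by
  cases n with
  | ofNat k =>
      show (⇑f)^[k] = _
      rw [Int.ofNat_eq_coe, zpow_natCast, Equiv.Perm.coe_pow]
      rfl
  | negSucc k =>
      show (⇑f.symm)^[k + 1] = _
      rw [zpow_negSucc, ← inv_pow, Equiv.Perm.coe_pow]
      rfl

lemma hIter_succ {X : Type*} [TopologicalSpace X] (f : X ≃ₜ X) (n : ℤ) (z : X) :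
    hIter f (n + 1) z = hIter f n (f z) := by
  rw [hIter_eq_pow, hIter_eq_pow, zpow_add_one]
  show (f.toEquiv ^ n * f.toEquiv) z = _
  rw [Equiv.Perm.mul_apply]
  rfl

lemma iterate_add_vec (f : ℝ × ℝ → ℝ × ℝ) (v : ℝ × ℝ)
    (hf : ∀ z, f (z + v) = f z + v) : ∀ k z, f^[k] (z + v) = f^[k] z + v := by
  intro k
  induction k with
  | zero => simp
  | succ k ih =>
      intro z
      rw [Function.iterate_succ_apply, Function.iterate_succ_apply, hf, ih]

lemma hIter_add_vec (F : (ℝ × ℝ) ≃ₜ (ℝ × ℝ))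
    (hper : ∀ (z : ℝ × ℝ) (v : ℤ × ℤ),
      F (z + ((v.1 : ℝ), (v.2 : ℝ))) = F z + ((v.1 : ℝ), (v.2 : ℝ)))
    (v : ℤ × ℤ) (n : ℤ) (z : ℝ × ℝ) :
    hIter F n (z + ((v.1 : ℝ), (v.2 : ℝ))) = hIter F n z + ((v.1 : ℝ), (v.2 : ℝ)) := by
  have hsymm : ∀ w : ℝ × ℝ, F.symm (w + ((v.1 : ℝ), (v.2 : ℝ)))
      = F.symm w + ((v.1 : ℝ), (v.2 : ℝ)) := by
    intro w
    apply F.toEquiv.injective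
    show F _ = F _
    rw [hper, F.apply_symm_apply, F.apply_symm_apply]
  cases n with
  | ofNat k => exact iterate_add_vec (⇑F) _ (fun z => hper z v) k z
  | negSucc k => exact iterate_add_vec (⇑F.symm) _ hsymm (k + 1) z

/-- If `F` commutes with integer translations and has uniformly bounded deviations
`|π₁(Fⁿ(z) − z) − nρ₁| ≤ C` for all `n ∈ ℤ`, then `H(z) = sup_{n∈ℤ} (π₁(Fⁿ(z)) − nρ₁)`
is finite (indeed `|H(z) − π₁(z)| ≤ C`) and satisfies `H(F(z)) = H(z) + ρ₁`,
`H(z+(1,0)) = H(z) + 1` and `H(z+(0,1)) = H(z)`. -/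
theorem sup_semiconjugacy_properties
    (F : (ℝ × ℝ) ≃ₜ (ℝ × ℝ))
    (hper : ∀ (z : ℝ × ℝ) (v : ℤ × ℤ),
      F (z + ((v.1 : ℝ), (v.2 : ℝ))) = F z + ((v.1 : ℝ), (v.2 : ℝ)))
    (ρ : ℝ × ℝ) (C : ℝ) (hC : 0 < C)
    (hbd : ∀ (z : ℝ × ℝ) (n : ℤ), |(hIter F n z - z).1 - (n : ℝ) * ρ.1| ≤ C)
    (H : ℝ × ℝ → ℝ)
    (hH : ∀ z : ℝ × ℝ, H z = ⨆ n : ℤ, ((hIter F n z).1 - (n : ℝ) * ρ.1)) :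
    (∀ z : ℝ × ℝ, |H z - z.1| ≤ C) ∧
    (∀ z : ℝ × ℝ, H (F z) = H z + ρ.1) ∧
    (∀ z : ℝ × ℝ, H (z + ((1 : ℝ), (0 : ℝ))) = H z + 1) ∧
    (∀ z : ℝ × ℝ, H (z + ((0 : ℝ), (1 : ℝ))) = H z) := by
  set g : ℝ × ℝ → ℤ → ℝ := fun z n => (hIter F n z).1 - (n : ℝ) * ρ.1 with hg
  have hub : ∀ z n, g z n ≤ z.1 + C := by
    intro z n
    have := (abs_le.mp (hbd z n)).2
    simp only [Prod.fst_sub] at this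
    simp only [hg]
    linarith
  have hbdd : ∀ z, BddAbove (Set.range (g z)) := by
    intro z
    exact ⟨z.1 + C, by rintro x ⟨n, rfl⟩; exact hub z n⟩
  have hzero : ∀ z, z.1 ≤ H z := by
    intro z
    rw [hH z]
    have := le_ciSup (hbdd z) (0 : ℤ)
    simpa [hg, hIter] using this
  have hHle : ∀ z, H z ≤ z.1 + C := by
    intro z
    rw [hH z]
    exact ciSup_le (hub z)
  refine ⟨?_, ?_, ?_, ?_⟩
  · intro z
    rw [abs_le]
    constructor
    · have := hzero z; linarith
    · have := hHle z; linarith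
  · intro z
    have key : ∀ n : ℤ, g (F z) n = g z (n + 1) + ρ.1 := by
      intro n
      simp only [hg, ← hIter_succ]
      push_cast
      ring
    rw [hH (F z), hH z]
    calc (⨆ n : ℤ, g (F z) n) = ⨆ n : ℤ, (g z (n + 1) + ρ.1) := by
          exact iSup_congr key
      _ = (⨆ n : ℤ, g z (n + 1)) + ρ.1 := by
          refine (ciSup_add ?_ _).symm
          refine (hbdd z).mono ?_
          rintro x ⟨n, rfl⟩; exact ⟨n + 1, rfl⟩
      _ = (⨆ n : ℤ, g z n) + ρ.1 := by
          congr 1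
          exact (Equiv.addRight (1 : ℤ)).surjective.iSup_comp (g z)
  · intro z
    have key : ∀ n : ℤ, g (z + ((1 : ℝ), (0 : ℝ))) n = g z n + 1 := by
      intro n
      have h := hIter_add_vec F hper (1, 0) n z
      simp only [hg]
      push_cast at h
      rw [h]
      simp [Prod.fst_add]
      ring
    rw [hH, hH]
    calc (⨆ n : ℤ, g (z + ((1 : ℝ), (0 : ℝ))) n) = ⨆ n : ℤ, (g z n + 1) := iSup_congr key
      _ = (⨆ n : ℤ, g z n) + 1 := (ciSup_add (hbdd z) _).symm
  · intro z
    have key : ∀ n : ℤ, g (z + ((0 : ℝ), (1 : ℝ))) n = g z n := by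
      intro n
      have h := hIter_add_vec F hper (0, 1) n z
      simp only [hg]
      push_cast at h
      rw [h]
      simp [Prod.fst_add]
    rw [hH, hH]
    exact iSup_congr key
end
end

section
/- There exist a homeomorphism f : 𝕋² → 𝕋² homotopic to the identity, a lift f̃ : ℝ² → ℝ², a point p ∈ 𝕋², and a vector v ∈ ℝ² of irrational slope, such that Fix(f) = {p}, the set of fixed points of f̃ is exactly π⁻¹(p), and the rotation set ρ(f̃) is the non-degenerate segment {t·v : 0 ≤ t ≤ s} for some s > 0; in particular ρ(f̃) is a non-degenerate interval of irrational slope having (0,0) as an endpoint. -/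
open Filter Topology Set Function

noncomputable section

/-- The Misiurewicz–Ziemian rotation set of a lift `F`. -/
def rotSet (F : ℝ × ℝ → ℝ × ℝ) : Set (ℝ × ℝ) :=
  ⋂ m ∈ Set.Ici (1 : ℕ),
    closure (⋃ n ∈ Set.Ici m, {y : ℝ × ℝ | ∃ x : ℝ × ℝ, y = ((n : ℝ))⁻¹ • (F^[n] x - x)})

open MeasureTheory intervalIntegral

namespace RotEx

/-! ### The golden ratio and its Diophantine properties -/

def gam : ℝ := (1 + Real.sqrt 5) / 2

lemma sqrt5_lb : (2:ℝ) ≤ Real.sqrt 5 := by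
  nlinarith [Real.sq_sqrt (by norm_num : (5:ℝ) ≥ 0), Real.sqrt_nonneg (5:ℝ)]

lemma sqrt5_ub : Real.sqrt 5 ≤ 9/4 := by
  nlinarith [Real.sq_sqrt (by norm_num : (5:ℝ) ≥ 0), Real.sqrt_nonneg (5:ℝ)]

lemma gam_lb : (3/2:ℝ) ≤ gam := by unfold gam; linarith [sqrt5_lb]
lemma gam_ub : gam ≤ 13/8 := by unfold gam; linarith [sqrt5_ub]
lemma gam_pos : (0:ℝ) < gam := by linarith [gam_lb]

lemma irrational_gam : Irrational gam := by
  have h5 : Irrational (Real.sqrt 5) := (by norm_num : Nat.Prime 5).irrational_sqrt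
  have h1 : Irrational (1 + Real.sqrt 5) := by
    simpa using h5.intCast_add 1
  simpa [gam, div_eq_mul_inv] using h1.div_intCast (by norm_num : (2:ℤ) ≠ 0)

lemma irrational_ne_ratio (x : ℝ) (hx : Irrational x) (p : ℤ) (q : ℝ) (hq : q ≠ 0)
    (hqz : ∃ n : ℤ, (n:ℝ) = q) : x ≠ p / q := by
  obtain ⟨n, rfl⟩ := hqz
  intro h
  have hn : (n:ℤ) ≠ 0 := by exact_mod_cast fun h0 => hq (by exact_mod_cast h0)
  have : Irrational ((p:ℝ) / (n:ℝ)) := h ▸ hx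
  have : Irrational (((p / n : ℚ) : ℝ)) := by
    rwa [Rat.cast_div, Rat.cast_intCast, Rat.cast_intCast]
  exact (Rat.not_irrational _) this

/-- The golden ratio is badly approximable: `1/(4q) ≤ |qγ - p|`. -/
lemma gam_dioph (q : ℕ) (hq : 1 ≤ q) (p : ℤ) : 1/(4*q) ≤ |(q:ℝ) * gam - p| := by
  set g' : ℝ := (1 - Real.sqrt 5) / 2 with hg'
  have hsum : gam + g' = 1 := by unfold gam; rw [hg']; ring
  have hprod : gam * g' = -1 := by
    unfold gam; rw [hg']
    have : Real.sqrt 5 * Real.sqrt 5 = 5 := Real.mul_self_sqrt (by norm_num)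
    nlinarith [this]
  have hqR : (0:ℝ) < q := by exact_mod_cast hq
  have hq1 : (1:ℝ) ≤ q := by exact_mod_cast hq
  have key : ((p:ℝ) - q * gam) * ((p:ℝ) - q * g') = ((p^2 - p*q - q^2 : ℤ) : ℝ) := by
    push_cast
    linear_combination (-(p:ℝ)*(q:ℝ)) * hsum + (q:ℝ)^2 * hprod
  have hA : (p^2 - p*q - q^2 : ℤ) ≠ 0 := by
    intro h0
    rw [h0] at key
    simp only [Int.cast_zero, mul_eq_zero, sub_eq_zero] at key
    rcases key with h | h
    · exact irrational_ne_ratio gam irrational_gam p q (ne_of_gt hqR) ⟨q, by push_cast; ring⟩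
        (by field_simp [ne_of_gt hqR] at h ⊢; linarith [h])
    · have hg'irr : Irrational g' := by
        have : g' = 1 - gam := by linarith [hsum]
        rw [this]
        simpa using irrational_gam.intCast_sub 1
      exact irrational_ne_ratio g' hg'irr p q (ne_of_gt hqR) ⟨q, by push_cast; ring⟩
        (by field_simp [ne_of_gt hqR] at h ⊢; linarith [h])
  have hAabs : (1:ℝ) ≤ |((p^2 - p*q - q^2 : ℤ) : ℝ)| := by
    rw [← Int.cast_abs]
    exact_mod_cast Int.one_le_abs hA
  rw [← key, abs_mul] at hAabs
  rcases le_or_gt 1 (|(p:ℝ) - q * gam|) with h | h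
  · calc 1/(4*(q:ℝ)) ≤ 1 := by
          rw [div_le_one (by positivity)]; nlinarith [hq1]
      _ ≤ |(q:ℝ) * gam - p| := by rwa [abs_sub_comm] at h
  · have hb : |(p:ℝ) - q * g'| ≤ 4 * q := by
      have h1 : |(p:ℝ) - q * g'| ≤ |(p:ℝ) - q * gam| + q * |gam - g'| := by
        have : (p:ℝ) - q * g' = ((p:ℝ) - q * gam) + q * (gam - g') := by ring
        rw [this]
        refine (abs_add_le _ _).trans ?_
        rw [abs_mul, abs_of_pos hqR]
      have h2 : |gam - g'| ≤ 9/4 := by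
        have : gam - g' = Real.sqrt 5 := by unfold gam; rw [hg']; ring
        rw [this, abs_of_nonneg (Real.sqrt_nonneg _)]
        exact sqrt5_ub
      nlinarith [hq1]
    have hbpos : (0:ℝ) < |(p:ℝ) - q * g'| := by
      by_contra hc
      push_neg at hc
      have : |(p:ℝ) - q * g'| = 0 := le_antisymm hc (abs_nonneg _)
      rw [this, mul_zero] at hAabs
      linarith
    rw [abs_sub_comm]
    calc 1/(4*(q:ℝ)) ≤ 1 / |(p:ℝ) - q * g'| := by
          apply div_le_div_of_nonneg_left (by norm_num) hbpos
          linarith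
      _ ≤ |(p:ℝ) - q * gam| := by
          rw [div_le_iff₀ hbpos]
          linarith [hAabs]

/-! ### Distance to the integers -/

def distZ (t : ℝ) : ℝ := |t - round t|

lemma distZ_nonneg (t : ℝ) : 0 ≤ distZ t := abs_nonneg _

lemma distZ_le_half (t : ℝ) : distZ t ≤ 1/2 := abs_sub_round t

lemma distZ_le (t : ℝ) (n : ℤ) : distZ t ≤ |t - n| := by
  rcases eq_or_ne n (round t) with rfl | h
  · exact le_of_eq rfl
  · have h1 : (1:ℝ) ≤ |(n:ℝ) - round t| := by
      rw [← Int.cast_sub, ← Int.cast_abs]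
      exact_mod_cast Int.one_le_abs (sub_ne_zero.2 h)
    have h2 : |(n:ℝ) - round t| ≤ |t - n| + |t - round t| := by
      have : (n:ℝ) - round t = -((t - n)) + (t - round t) := by ring
      rw [this]
      exact (abs_add_le _ _).trans (by rw [abs_neg])
    have := distZ_le_half t
    unfold distZ at *
    linarith

lemma distZ_dist (s t : ℝ) : |distZ s - distZ t| ≤ |s - t| := by
  rw [abs_sub_le_iff]
  constructor
  · have h1 : distZ s ≤ |s - round t| := distZ_le s (round t)
    have h2 : |s - round t| ≤ |s - t| + |t - round t| := by
      have : s - (round t : ℝ) = (s - t) + (t - round t) := by ring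
      rw [this]; exact abs_add_le _ _
    unfold distZ at *
    linarith
  · have h1 : distZ t ≤ |t - round s| := distZ_le t (round s)
    have h2 : |t - round s| ≤ |s - t| + |s - round s| := by
      have : t - (round s : ℝ) = -(s - t) + (s - round s) := by ring
      rw [this]
      exact (abs_add_le _ _).trans (by rw [abs_neg])
    unfold distZ at *
    linarith

lemma distZ_add_int (t : ℝ) (n : ℤ) : distZ (t + n) = distZ t := by
  unfold distZ
  rw [round_add_intCast]
  push_cast
  ring_nf

lemma distZ_neg (t : ℝ) : distZ (-t) = distZ t := by
  have h1 : ∀ s : ℝ, distZ (-s) ≤ distZ s := by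
    intro s
    have h := distZ_le (-s) (-(round s))
    have e : |(-s) - ((-(round s) : ℤ) : ℝ)| = distZ s := by
      unfold distZ
      push_cast
      rw [show -s - -(round s : ℝ) = -(s - round s) by ring, abs_neg]
    rwa [e] at h
  refine le_antisymm (h1 t) ?_
  simpa using h1 (-t)

lemma distZ_int (n : ℤ) : distZ n = 0 := by
  unfold distZ; rw [round_intCast]; simp

lemma distZ_eq_zero_iff (t : ℝ) : distZ t = 0 ↔ ∃ n : ℤ, t = n := by
  constructor
  · intro h
    exact ⟨round t, by unfold distZ at h; have := abs_eq_zero.1 h; linarith [sub_eq_zero.1 this]⟩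
  · rintro ⟨n, rfl⟩; exact distZ_int n

lemma distZ_of_small {u : ℝ} (h0 : 0 ≤ u) (h1 : u ≤ 1/2) : distZ u = u := by
  rcases lt_or_eq_of_le h1 with h | h
  · have : round u = 0 := by
      rw [round_eq]
      have : ⌊u + 1/2⌋ = 0 := by
        apply Int.floor_eq_zero_iff.2
        constructor
        · simp; linarith
        · simp; linarith
      simpa using this
    unfold distZ
    rw [this]
    simpa using abs_of_nonneg h0
  · subst h
    have hr : round ((1:ℝ)/2) = 1 := by
      rw [round_eq]
      norm_num
    unfold distZ
    rw [hr]
    norm_num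

lemma distZ_pos_of_not_int {t : ℝ} (h : ∀ n : ℤ, t ≠ n) : 0 < distZ t := by
  rcases lt_or_eq_of_le (distZ_nonneg t) with hp | hz
  · exact hp
  · exact absurd ((distZ_eq_zero_iff t).1 hz.symm).choose_spec (h _)

/-! ### The map `F` -/

def vv : ℝ × ℝ := (1, gam)

def psi (x : ℝ × ℝ) : ℝ := (1/8) * max (distZ x.1) (distZ x.2)

lemma psi_nonneg (x : ℝ × ℝ) : 0 ≤ psi x := by
  unfold psi
  have := distZ_nonneg x.1
  have := le_max_left (distZ x.1) (distZ x.2)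
  nlinarith

lemma psi_le (x : ℝ × ℝ) : psi x ≤ 1/16 := by
  unfold psi
  have h1 := distZ_le_half x.1
  have h2 := distZ_le_half x.2
  have := max_le h1 h2
  linarith

lemma psi_dist (x y : ℝ × ℝ) : |psi x - psi y| ≤ (1/8) * dist x y := by
  unfold psi
  rw [← mul_sub, abs_mul, abs_of_nonneg (by norm_num : (0:ℝ) ≤ 1/8)]
  have h := abs_max_sub_max_le_max (distZ x.1) (distZ x.2) (distZ y.1) (distZ y.2)
  have h1 := distZ_dist x.1 y.1
  have h2 := distZ_dist x.2 y.2
  have hd : dist x y = max (dist x.1 y.1) (dist x.2 y.2) := rfl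
  rw [hd]
  have e1 : dist x.1 y.1 = |x.1 - y.1| := Real.dist_eq _ _
  have e2 : dist x.2 y.2 = |x.2 - y.2| := Real.dist_eq _ _
  rw [e1, e2]
  have : max |distZ x.1 - distZ y.1| |distZ x.2 - distZ y.2| ≤ max |x.1 - y.1| |x.2 - y.2| :=
    max_le_max h1 h2
  nlinarith [le_max_left |x.1 - y.1| |x.2 - y.2|, le_max_right |x.1 - y.1| |x.2 - y.2|,
    abs_nonneg (x.1 - y.1), abs_nonneg (x.2-y.2)]

lemma psi_periodic (x : ℝ × ℝ) (m n : ℤ) : psi (x + ((m:ℝ), (n:ℝ))) = psi x := by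
  unfold psi
  have e1 : (x + ((m:ℝ), (n:ℝ))).1 = x.1 + m := rfl
  have e2 : (x + ((m:ℝ), (n:ℝ))).2 = x.2 + n := rfl
  rw [e1, e2, distZ_add_int, distZ_add_int]

lemma psi_continuous : Continuous psi := by
  have hz : Continuous distZ := by
    have : LipschitzWith 1 distZ := by
      apply LipschitzWith.of_dist_le_mul
      intro a b
      simpa [Real.dist_eq] using distZ_dist a b
    exact this.continuous
  exact continuous_const.mul ((hz.comp continuous_fst).max (hz.comp continuous_snd))

lemma psi_eq_zero_iff (x : ℝ × ℝ) : psi x = 0 ↔ (∃ m : ℤ, x.1 = m) ∧ (∃ n : ℤ, x.2 = n) := by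
  unfold psi
  rw [mul_eq_zero]
  constructor
  · rintro (h | h)
    · norm_num at h
    · have h1 := distZ_nonneg x.1
      have h2 := distZ_nonneg x.2
      have e1 : distZ x.1 = 0 := le_antisymm (le_of_le_of_eq (le_max_left _ _) h) h1
      have e2 : distZ x.2 = 0 := le_antisymm (le_of_le_of_eq (le_max_right _ _) h) h2
      exact ⟨(distZ_eq_zero_iff _).1 e1, (distZ_eq_zero_iff _).1 e2⟩
  · rintro ⟨⟨m, h1⟩, ⟨n, h2⟩⟩
    right
    rw [h1, h2, distZ_int, distZ_int]
    simp

def Fmap (x : ℝ × ℝ) : ℝ × ℝ := x + psi x • vv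

lemma Fmap_continuous : Continuous Fmap :=
  continuous_id.add (psi_continuous.smul continuous_const)

lemma norm_vv : ‖vv‖ = gam := by
  have : ‖vv‖ = max ‖(1:ℝ)‖ ‖gam‖ := rfl
  rw [this]
  rw [Real.norm_eq_abs, Real.norm_eq_abs, abs_one, abs_of_pos gam_pos]
  exact max_eq_right (by linarith [gam_lb])

lemma Fmap_equivariant (x : ℝ × ℝ) (m n : ℤ) :
    Fmap (x + ((m:ℝ), (n:ℝ))) = Fmap x + ((m:ℝ), (n:ℝ)) := by
  unfold Fmap
  rw [psi_periodic]
  abel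

lemma dist_smul_vv (a b : ℝ) : dist (a • vv) (b • vv) = |a - b| * gam := by
  rw [dist_eq_norm, ← sub_smul, norm_smul, norm_vv, Real.norm_eq_abs]

def Hmap (y : ℝ × ℝ) (x : ℝ × ℝ) : ℝ × ℝ := y - psi x • vv

lemma Hmap_contracting (y : ℝ × ℝ) : ContractingWith (1/4 : NNReal) (Hmap y) := by
  constructor
  · rw [show ((1/4 : NNReal)) = ((4:NNReal))⁻¹ by norm_num]
    rw [NNReal.inv_lt_one_iff] <;> norm_num
  · apply LipschitzWith.of_dist_le_mul
    intro a b
    unfold Hmap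
    rw [dist_eq_norm]
    have e : (y - psi a • vv) - (y - psi b • vv) = psi b • vv - psi a • vv := by abel
    rw [e, ← dist_eq_norm, dist_smul_vv]
    have h1 := psi_dist b a
    have h2 : |psi b - psi a| * gam ≤ ((1/8) * dist b a) * gam := by
      apply mul_le_mul_of_nonneg_right h1 (le_of_lt gam_pos)
    have h3 : ((1/8) * dist b a) * gam ≤ (1/4) * dist a b := by
      rw [dist_comm b a]
      nlinarith [gam_ub, dist_nonneg (x := a) (y := b)]
    calc |psi b - psi a| * gam ≤ _ := h2
      _ ≤ (1/4) * dist a b := h3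
      _ = ((1/4 : NNReal) : ℝ) * dist a b := by norm_num

def Finv (y : ℝ × ℝ) : ℝ × ℝ := (Hmap_contracting y).fixedPoint (Hmap y)

lemma Finv_spec (y : ℝ × ℝ) : y - psi (Finv y) • vv = Finv y :=
  (Hmap_contracting y).fixedPoint_isFixedPt

lemma Fmap_Finv (y : ℝ × ℝ) : Fmap (Finv y) = y := by
  unfold Fmap
  nth_rewrite 1 [← Finv_spec y]
  abel

lemma Finv_Fmap (x : ℝ × ℝ) : Finv (Fmap x) = x := by
  have hfix : Function.IsFixedPt (Hmap (Fmap x)) x := by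
    unfold Function.IsFixedPt Hmap Fmap
    abel
  exact ((Hmap_contracting (Fmap x)).fixedPoint_unique hfix).symm

lemma Finv_lipschitz : LipschitzWith 2 Finv := by
  apply LipschitzWith.of_dist_le_mul
  intro a b
  have ea := Finv_spec a
  have eb := Finv_spec b
  have key : dist (Finv a) (Finv b) ≤ dist a b + (1/4) * dist (Finv a) (Finv b) := by
    calc dist (Finv a) (Finv b) = dist (a - psi (Finv a) • vv) (b - psi (Finv b) • vv) := by
          rw [ea, eb]
      _ ≤ dist a b + dist (psi (Finv a) • vv) (psi (Finv b) • vv) := dist_sub_sub_le _ _ _ _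
      _ ≤ dist a b + (1/4) * dist (Finv a) (Finv b) := by
          rw [dist_smul_vv]
          have h1 := psi_dist (Finv a) (Finv b)
          have h2 : |psi (Finv a) - psi (Finv b)| * gam ≤ (1/4) * dist (Finv a) (Finv b) := by
            nlinarith [gam_ub, gam_pos, dist_nonneg (x := Finv a) (y := Finv b),
              abs_nonneg (psi (Finv a) - psi (Finv b))]
          linarith
  have : dist (Finv a) (Finv b) ≤ (4/3) * dist a b := by linarith
  calc dist (Finv a) (Finv b) ≤ (4/3) * dist a b := this
    _ ≤ ((2:NNReal) : ℝ) * dist a b := by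
        have := dist_nonneg (x := a) (y := b)
        norm_num
        linarith

def FH : (ℝ × ℝ) ≃ₜ (ℝ × ℝ) where
  toFun := Fmap
  invFun := Finv
  left_inv := Finv_Fmap
  right_inv := Fmap_Finv
  continuous_toFun := Fmap_continuous
  continuous_invFun := Finv_lipschitz.continuous

lemma Finv_equivariant (y : ℝ × ℝ) (m n : ℤ) :
    Finv (y + ((m:ℝ), (n:ℝ))) = Finv y + ((m:ℝ), (n:ℝ)) := by
  have : Fmap (Finv y + ((m:ℝ), (n:ℝ))) = y + ((m:ℝ), (n:ℝ)) := by
    rw [Fmap_equivariant, Fmap_Finv]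
  rw [← this, Finv_Fmap]


lemma Fmap_def (x : ℝ × ℝ) : Fmap x = x + psi x • vv := rfl

lemma Finv_continuous : Continuous Finv := Finv_lipschitz.continuous

lemma distZ_round (t : ℝ) : distZ t = |t - round t| := rfl

lemma psi_origin : psi ((0:ℝ), (0:ℝ)) = 0 := by
  have h0 : distZ (0:ℝ) = 0 := by
    have := distZ_int 0
    simpa using this
  unfold psi
  simp [h0]

/-! ### The torus -/

instance fact01 : Fact ((0:ℝ) < 1) := ⟨one_pos⟩

lemma addcircle_eq_iff (a b : ℝ) :
    (a : AddCircle (1:ℝ)) = (b : AddCircle (1:ℝ)) ↔ ∃ m : ℤ, b = a + m := by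
  rw [QuotientAddGroup.eq_iff_sub_mem, AddSubgroup.mem_zmultiples_iff]
  constructor
  · rintro ⟨k, hk⟩
    refine ⟨-k, ?_⟩
    have hk' : (k:ℝ) = a - b := by
      have : (k:ℤ) • (1:ℝ) = (k:ℝ) := by simp
      rw [this] at hk
      exact hk
    push_cast
    linarith
  · rintro ⟨m, rfl⟩
    refine ⟨-m, ?_⟩
    have : ((-m:ℤ)) • (1:ℝ) = ((-m:ℤ):ℝ) := by simp
    rw [this]
    push_cast
    ring

lemma proj_eq_iff (x y : ℝ × ℝ) :
    proj x = proj y ↔ ∃ m n : ℤ, y = x + ((m:ℝ), (n:ℝ)) := by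
  unfold proj
  rw [Prod.ext_iff]
  constructor
  · rintro ⟨h1, h2⟩
    obtain ⟨m, hm⟩ := (addcircle_eq_iff _ _).1 h1
    obtain ⟨n, hn⟩ := (addcircle_eq_iff _ _).1 h2
    exact ⟨m, n, Prod.ext hm hn⟩
  · rintro ⟨m, n, rfl⟩
    constructor
    · exact (addcircle_eq_iff _ _).2 ⟨m, rfl⟩
    · exact (addcircle_eq_iff _ _).2 ⟨n, rfl⟩

def rep (z : T2) : ℝ × ℝ := ((AddCircle.equivIco 1 0 z.1 : ℝ), (AddCircle.equivIco 1 0 z.2 : ℝ))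

lemma proj_rep (z : T2) : proj (rep z) = z := by
  unfold proj rep
  exact Prod.ext ((AddCircle.equivIco (1:ℝ) 0).symm_apply_apply z.1)
    ((AddCircle.equivIco (1:ℝ) 0).symm_apply_apply z.2)

lemma proj_surjective : Function.Surjective proj := fun z => ⟨rep z, proj_rep z⟩

def ftor (z : T2) : T2 := proj (Fmap (rep z))
def ftorinv (z : T2) : T2 := proj (Finv (rep z))

lemma ftor_proj (x : ℝ × ℝ) : ftor (proj x) = proj (Fmap x) := by
  unfold ftor
  obtain ⟨m, n, h⟩ := (proj_eq_iff _ _).1 (proj_rep (proj x))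
  conv_rhs => rw [h]
  rw [Fmap_equivariant]
  exact (proj_eq_iff _ _).2 ⟨m, n, rfl⟩

lemma ftorinv_proj (x : ℝ × ℝ) : ftorinv (proj x) = proj (Finv x) := by
  unfold ftorinv
  obtain ⟨m, n, h⟩ := (proj_eq_iff _ _).1 (proj_rep (proj x))
  conv_rhs => rw [h]
  rw [Finv_equivariant]
  exact (proj_eq_iff _ _).2 ⟨m, n, rfl⟩

lemma proj_isOpenQuotientMap : IsOpenQuotientMap proj := by
  have h : IsOpenQuotientMap (Prod.map (QuotientAddGroup.mk : ℝ → AddCircle (1:ℝ))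
      (QuotientAddGroup.mk : ℝ → AddCircle (1:ℝ))) :=
    QuotientAddGroup.isOpenQuotientMap_mk.prodMap QuotientAddGroup.isOpenQuotientMap_mk
  exact h

lemma continuous_ftor : Continuous ftor := by
  rw [proj_isOpenQuotientMap.isQuotientMap.continuous_iff]
  have : ftor ∘ proj = proj ∘ Fmap := funext fun x => ftor_proj x
  rw [this]
  exact (proj_isOpenQuotientMap.continuous).comp Fmap_continuous

lemma continuous_ftorinv : Continuous ftorinv := by
  rw [proj_isOpenQuotientMap.isQuotientMap.continuous_iff]
  have : ftorinv ∘ proj = proj ∘ Finv := funext fun x => ftorinv_proj x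
  rw [this]
  exact (proj_isOpenQuotientMap.continuous).comp Finv_continuous

def fH : T2 ≃ₜ T2 where
  toFun := ftor
  invFun := ftorinv
  left_inv := by
    intro z
    obtain ⟨x, rfl⟩ := proj_surjective z
    rw [ftor_proj, ftorinv_proj, Finv_Fmap]
  right_inv := by
    intro z
    obtain ⟨x, rfl⟩ := proj_surjective z
    rw [ftorinv_proj, ftor_proj, Fmap_Finv]
  continuous_toFun := continuous_ftor
  continuous_invFun := continuous_ftorinv

/-! ### Fixed point sets -/

def p0 : T2 := proj (0, 0)

lemma psi_zero_iff_proj (x : ℝ × ℝ) : psi x = 0 ↔ proj x = p0 := by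
  rw [psi_eq_zero_iff]
  unfold p0
  rw [proj_eq_iff]
  constructor
  · rintro ⟨⟨m, hm⟩, ⟨n, hn⟩⟩
    exact ⟨-m, -n, by rw [Prod.ext_iff]; constructor <;> simp [hm, hn]⟩
  · rintro ⟨m, n, h⟩
    rw [Prod.ext_iff] at h
    have h1 : (0:ℝ) = x.1 + m := by simpa using h.1
    have h2 : (0:ℝ) = x.2 + n := by simpa using h.2
    exact ⟨⟨-m, by push_cast; linarith⟩, ⟨-n, by push_cast; linarith⟩⟩

lemma Fmap_fixed_iff (x : ℝ × ℝ) : Fmap x = x ↔ psi x = 0 := by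
  rw [Fmap_def]
  constructor
  · intro h
    have : psi x • vv = 0 := by
      have := congrArg (fun y => y - x) h
      simpa using this
    have h1 : psi x • vv = (psi x * 1, psi x * gam) := rfl
    rw [h1, Prod.ext_iff] at this
    simpa using this.1
  · intro h
    rw [h]
    simp

lemma Fmap_fixed_set : {x : ℝ × ℝ | Fmap x = x} = proj ⁻¹' ({p0} : Set T2) := by
  ext x
  simp only [mem_setOf_eq, mem_preimage, mem_singleton_iff]
  rw [Fmap_fixed_iff, psi_zero_iff_proj]

lemma ftor_fixed_set : {z : T2 | ftor z = z} = ({p0} : Set T2) := by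
  ext z
  simp only [mem_setOf_eq, mem_singleton_iff]
  obtain ⟨x, rfl⟩ := proj_surjective z
  rw [ftor_proj]
  constructor
  · intro h
    rw [← psi_zero_iff_proj]
    obtain ⟨m, n, hmn⟩ := (proj_eq_iff _ _).1 h
    rw [Fmap_def] at hmn
    have hfst := congrArg Prod.fst hmn
    simp only [Prod.fst_add, Prod.smul_fst, vv, smul_eq_mul, mul_one] at hfst
    -- hfst : x.1 = x.1 + psi x + m
    have h2 : psi x = -(m:ℝ) := by linarith
    have hge := psi_nonneg x
    have hle := psi_le x
    have hm0 : m = 0 := by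
      have h3 : (0:ℝ) ≤ -(m:ℝ) := h2 ▸ hge
      have h4 : -(m:ℝ) ≤ 1/16 := h2 ▸ hle
      have h5 : (m:ℝ) ≤ 0 := by linarith
      have h6 : (-1:ℝ) < (m:ℝ) := by linarith
      have : (m:ℤ) ≤ 0 := by exact_mod_cast h5
      have : (-1:ℤ) < m := by exact_mod_cast h6
      omega
    rw [hm0] at h2
    simpa using h2
  · intro h
    have hz : psi x = 0 := (psi_zero_iff_proj x).2 h
    rw [(Fmap_fixed_iff x).2 hz]

/-! ### Displacements of iterates -/

def sig (n : ℕ) (x : ℝ × ℝ) : ℝ := (Fmap^[n] x).1 - x.1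

lemma iter_eq (n : ℕ) (x : ℝ × ℝ) : Fmap^[n] x = x + sig n x • vv := by
  induction n with
  | zero => simp [sig]
  | succ n ih =>
    rw [Function.iterate_succ_apply', ih, Fmap_def]
    have hs : sig (n+1) x = sig n x + psi (x + sig n x • vv) := by
      unfold sig
      rw [Function.iterate_succ_apply', ih, Fmap_def]
      simp only [Prod.fst_add, Prod.smul_fst, vv, smul_eq_mul, mul_one]
      ring
    rw [hs]
    module

lemma sig_succ (n : ℕ) (x : ℝ × ℝ) : sig (n+1) x = sig n x + psi (Fmap^[n] x) := by
  unfold sig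
  rw [Function.iterate_succ_apply', Fmap_def]
  simp only [Prod.fst_add, Prod.smul_fst, vv, smul_eq_mul, mul_one]
  ring

lemma sig_nonneg (n : ℕ) (x : ℝ × ℝ) : 0 ≤ sig n x := by
  induction n with
  | zero => simp [sig]
  | succ n ih => rw [sig_succ]; linarith [psi_nonneg (Fmap^[n] x)]

lemma sig_le (n : ℕ) (x : ℝ × ℝ) : sig n x ≤ n * (1/16) := by
  induction n with
  | zero => simp [sig]
  | succ n ih =>
    rw [sig_succ]
    push_cast
    linarith [psi_le (Fmap^[n] x)]

lemma sig_continuous (n : ℕ) : Continuous (sig n) := by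
  have : Continuous (Fmap^[n]) := by
    induction n with
    | zero => simpa using continuous_id
    | succ n ih => rw [Function.iterate_succ']; exact Fmap_continuous.comp ih
  exact (continuous_fst.comp this).sub continuous_fst

lemma iterate_equivariant (k : ℕ) (x : ℝ × ℝ) (m n : ℤ) :
    Fmap^[k] (x + ((m:ℝ), (n:ℝ))) = Fmap^[k] x + ((m:ℝ), (n:ℝ)) := by
  induction k with
  | zero => simp
  | succ k ih => rw [Function.iterate_succ_apply', ih, Function.iterate_succ_apply',
      Fmap_equivariant]

lemma sig_periodic (k : ℕ) (x : ℝ × ℝ) (m n : ℤ) :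
    sig k (x + ((m:ℝ), (n:ℝ))) = sig k x := by
  unfold sig
  rw [iterate_equivariant]
  simp

lemma sig_origin (n : ℕ) : sig n (0, 0) = 0 := by
  have h : Function.IsFixedPt Fmap (0,0) := by
    unfold Function.IsFixedPt
    rw [Fmap_def, psi_origin]
    simp
  unfold sig
  rw [h.iterate n]
  simp

/-- The maximum of `sig n` is attained. -/
lemma exists_max (n : ℕ) : ∃ x : ℝ × ℝ, ∀ y : ℝ × ℝ, sig n y ≤ sig n x := by
  have hK : IsCompact (Icc (0:ℝ) 1 ×ˢ Icc (0:ℝ) 1) := isCompact_Icc.prod isCompact_Icc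
  obtain ⟨x, hxK, hmax⟩ := hK.exists_isMaxOn (by
      refine ⟨(0,0), Set.mem_prod.2 ⟨?_, ?_⟩⟩ <;> exact ⟨le_refl 0, zero_le_one⟩)
    ((sig_continuous n).continuousOn)
  refine ⟨x, fun y => ?_⟩
  have hy : sig n y = sig n (Int.fract y.1, Int.fract y.2) := by
    have : (Int.fract y.1, Int.fract y.2) = y + (((-⌊y.1⌋ : ℤ) : ℝ), ((-⌊y.2⌋ : ℤ) : ℝ)) := by
      rw [Prod.ext_iff, Int.fract, Int.fract]
      constructor
      · simp only [Prod.fst_add]; push_cast; ring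
      · simp only [Prod.snd_add]; push_cast; ring
    rw [this, sig_periodic]
  rw [hy]
  exact hmax (Set.mem_prod.2 ⟨⟨Int.fract_nonneg _, le_of_lt (Int.fract_lt_one _)⟩,
    ⟨Int.fract_nonneg _, le_of_lt (Int.fract_lt_one _)⟩⟩)

def xmax (n : ℕ) : ℝ × ℝ := (exists_max n).choose

def Mn (n : ℕ) : ℝ := sig n (xmax n)

lemma sig_le_Mn (n : ℕ) (y : ℝ × ℝ) : sig n y ≤ Mn n := (exists_max n).choose_spec y

lemma Mn_nonneg (n : ℕ) : 0 ≤ Mn n := by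
  have := sig_le_Mn n (0,0)
  rwa [sig_origin] at this

lemma range_sig (n : ℕ) : Set.range (sig n) = Icc 0 (Mn n) := by
  apply Subset.antisymm
  · rintro _ ⟨y, rfl⟩
    exact ⟨sig_nonneg n y, sig_le_Mn n y⟩
  · have hpc : IsPreconnected (Set.range (sig n)) := by
      rw [← image_univ]
      exact (isPreconnected_univ).image _ ((sig_continuous n).continuousOn)
    exact hpc.Icc_subset ⟨(0,0), sig_origin n⟩ ⟨xmax n, rfl⟩

/-! ### Computation of the rotation set -/

def aseq (n : ℕ) : ℝ := Mn n / n

lemma aseq_nonneg (n : ℕ) : 0 ≤ aseq n := div_nonneg (Mn_nonneg n) (Nat.cast_nonneg n)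

lemma Mn_le' (n : ℕ) : Mn n ≤ n * (1/16) := sig_le n (xmax n)

lemma aseq_le (n : ℕ) : aseq n ≤ 1/16 := by
  unfold aseq
  rcases Nat.eq_zero_or_pos n with rfl | hn
  · simp
  · rw [div_le_iff₀ (by exact_mod_cast hn)]
    have := Mn_le' n
    linarith

def Emb (t : ℝ) : ℝ × ℝ := t • vv

lemma Emb_continuous : Continuous Emb := continuous_id.smul continuous_const

lemma Emb_injective : Function.Injective Emb := by
  intro a b h
  have := congrArg Prod.fst h
  simpa [Emb, vv] using this

/-- The displacement set at time `n ≥ 1`. -/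
lemma inner_set_eq (n : ℕ) (hn : 1 ≤ n) :
    {y : ℝ × ℝ | ∃ x : ℝ × ℝ, y = ((n : ℝ))⁻¹ • (Fmap^[n] x - x)} = Emb '' Icc 0 (aseq n) := by
  have hnR : (0:ℝ) < n := by exact_mod_cast hn
  ext y
  simp only [mem_setOf_eq, mem_image]
  constructor
  · rintro ⟨x, rfl⟩
    refine ⟨sig n x / n, ?_, ?_⟩
    · constructor
      · apply div_nonneg _ (le_of_lt hnR)
        have : sig n x ∈ Icc 0 (Mn n) := by rw [← range_sig]; exact ⟨x, rfl⟩
        exact this.1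
      · unfold aseq
        rw [div_le_div_iff_of_pos_right hnR]
        exact (show sig n x ∈ Icc 0 (Mn n) by rw [← range_sig]; exact ⟨x, rfl⟩).2
    · rw [iter_eq]
      unfold Emb
      rw [show x + sig n x • vv - x = sig n x • vv by abel, smul_smul]
      rw [div_eq_inv_mul]
  · rintro ⟨t, ⟨ht0, ht1⟩, rfl⟩
    have hmem : t * n ∈ Set.range (sig n) := by
      rw [range_sig]
      constructor
      · positivity
      · unfold aseq at ht1
        rw [le_div_iff₀ hnR] at ht1
        exact ht1
    obtain ⟨x, hx⟩ := hmem
    refine ⟨x, ?_⟩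
    rw [iter_eq]
    unfold Emb
    rw [show x + sig n x • vv - x = sig n x • vv by abel, smul_smul, hx, inv_mul_eq_div,
      mul_div_assoc]
    rw [div_self (ne_of_gt hnR), mul_one]


/-! ### The segment -/

def Aset (m : ℕ) : Set ℝ := aseq '' (Ici m)

lemma Aset_nonempty (m : ℕ) : (Aset m).Nonempty := ⟨aseq m, m, le_refl m, rfl⟩

lemma Aset_bdd (m : ℕ) : BddAbove (Aset m) := by
  refine ⟨1/16, ?_⟩
  rintro _ ⟨n, _, rfl⟩
  exact aseq_le n

def bseq (m : ℕ) : ℝ := sSup (Aset m)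

lemma bseq_nonneg (m : ℕ) : 0 ≤ bseq m :=
  le_csSup (Aset_bdd m) ⟨m, le_refl m, rfl⟩ |>.trans' (aseq_nonneg m)

lemma aseq_le_bseq {m n : ℕ} (h : m ≤ n) : aseq n ≤ bseq m :=
  le_csSup (Aset_bdd m) ⟨n, h, rfl⟩

def sval : ℝ := ⨅ k : ℕ, bseq (k + 1)

lemma bseq_bddBelow : BddBelow (Set.range fun k : ℕ => bseq (k+1)) := by
  refine ⟨0, ?_⟩
  rintro _ ⟨k, rfl⟩
  exact bseq_nonneg (k+1)

lemma sval_le_bseq (m : ℕ) (hm : 1 ≤ m) : sval ≤ bseq m := by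
  have : sval ≤ bseq ((m-1) + 1) := ciInf_le bseq_bddBelow (m-1)
  rwa [Nat.sub_add_cancel hm] at this

lemma le_sval {t : ℝ} (h : ∀ k : ℕ, t ≤ bseq (k+1)) : t ≤ sval :=
  le_ciInf h

lemma sval_nonneg : 0 ≤ sval := le_sval fun k => bseq_nonneg (k+1)

/-- Closure of the union of displacement sets from time `m` on. -/
lemma closure_union_eq (m : ℕ) (hm : 1 ≤ m) :
    closure (⋃ n ∈ Set.Ici m, {y : ℝ × ℝ | ∃ x : ℝ × ℝ, y = ((n : ℝ))⁻¹ • (Fmap^[n] x - x)})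
      = Emb '' Icc 0 (bseq m) := by
  have hU : (⋃ n ∈ Set.Ici m, {y : ℝ × ℝ | ∃ x : ℝ × ℝ, y = ((n : ℝ))⁻¹ • (Fmap^[n] x - x)})
      = Emb '' (⋃ n ∈ Set.Ici m, Icc 0 (aseq n)) := by
    rw [Set.image_iUnion₂]
    apply Set.iUnion₂_congr
    intro n hn
    exact inner_set_eq n (hm.trans hn)
  rw [hU]
  apply Subset.antisymm
  · apply closure_minimal
    · apply Set.image_mono
      apply Set.iUnion₂_subset
      intro n hn
      exact Icc_subset_Icc (le_refl 0) (aseq_le_bseq hn)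
    · exact (isCompact_Icc.image Emb_continuous).isClosed
  · intro w hw
    obtain ⟨t, ⟨ht0, ht1⟩, rfl⟩ := hw
    have hsub : Aset m ⊆ ⋃ n ∈ Set.Ici m, Icc 0 (aseq n) := by
      rintro _ ⟨n, hn, rfl⟩
      exact Set.mem_biUnion hn ⟨aseq_nonneg n, le_refl _⟩
    rcases eq_or_lt_of_le ht1 with rfl | hlt
    · have hb : bseq m ∈ closure (Aset m) :=
        (isLUB_csSup (Aset_nonempty m) (Aset_bdd m)).mem_closure (Aset_nonempty m)
      have : bseq m ∈ closure (⋃ n ∈ Set.Ici m, Icc 0 (aseq n)) :=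
        closure_mono hsub hb
      exact map_mem_closure Emb_continuous this (Set.mapsTo_image _ _)
    · apply subset_closure
      obtain ⟨_, ⟨n, hn, rfl⟩, hlt2⟩ := exists_lt_of_lt_csSup (Aset_nonempty m) hlt
      exact Set.mem_image_of_mem Emb (Set.mem_biUnion hn ⟨ht0, le_of_lt hlt2⟩)

theorem rotSet_eq : rotSet Fmap = {w : ℝ × ℝ | ∃ t : ℝ, 0 ≤ t ∧ t ≤ sval ∧ w = t • vv} := by
  unfold rotSet
  have h1 : ⋂ m ∈ Set.Ici (1:ℕ),
      closure (⋃ n ∈ Set.Ici m, {y : ℝ × ℝ | ∃ x : ℝ × ℝ, y = ((n : ℝ))⁻¹ • (Fmap^[n] x - x)})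
      = ⋂ m ∈ Set.Ici (1:ℕ), Emb '' Icc 0 (bseq m) := by
    apply Set.iInter₂_congr
    intro m hm
    exact closure_union_eq m hm
  rw [h1]
  apply Subset.antisymm
  · intro w hw
    simp only [Set.mem_iInter] at hw
    obtain ⟨t, ⟨ht0, _⟩, rfl⟩ := hw 1 (Set.mem_Ici.2 (le_refl 1))
    have hts : t ≤ sval := by
      apply le_sval
      intro k
      obtain ⟨t', ht', he⟩ := hw (k+1) (Set.mem_Ici.2 (Nat.le_add_left 1 k))
      rw [← Emb_injective he]
      exact ht'.2
    exact ⟨t, ht0, hts, rfl⟩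
  · rintro w ⟨t, ht0, hts, rfl⟩
    simp only [Set.mem_iInter]
    intro m hm
    exact ⟨t, ⟨ht0, hts.trans (sval_le_bseq m hm)⟩, rfl⟩

theorem sval_pos (c : ℝ) (hc : 0 < c) (h : ∀ m : ℕ, 1 ≤ m → ∃ n, m ≤ n ∧ c ≤ aseq n) :
    0 < sval := by
  have : c ≤ sval := by
    apply le_sval
    intro k
    obtain ⟨n, hn, hcn⟩ := h (k+1) (Nat.le_add_left 1 k)
    exact hcn.trans (aseq_le_bseq hn)
  linarith

/-! ### The speed along the orbit line -/

def phi (t : ℝ) : ℝ := (1/8) * max (distZ t) (distZ (gam * t + 1/2))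

def rr (k : ℕ) : ℝ := distZ (gam * k + 1/2)

lemma rr_le_half (k : ℕ) : rr k ≤ 1/2 := distZ_le_half _

lemma rr_lb (k : ℕ) : 1/(16*(k+1)) ≤ rr k := by
  rcases Nat.eq_zero_or_pos k with rfl | hk
  · unfold rr
    push_cast
    rw [show gam * 0 + 1/2 = (1:ℝ)/2 by ring, distZ_of_small (by norm_num) (le_refl _)]
    norm_num
  · unfold rr
    rw [distZ_round]
    set p := round (gam * (k:ℕ) + 1/2) with hp
    have key := gam_dioph (2*k) (by omega) (2*p - 1)
    have e : ((2*k:ℕ):ℝ) * gam - ((2*p-1:ℤ):ℝ) = 2*(gam*(k:ℕ) + 1/2 - p) := by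
      push_cast
      ring
    rw [e, abs_mul, abs_two] at key
    have hkR : (1:ℝ) ≤ (k:ℝ) := by exact_mod_cast hk
    have e2 : ((2*k:ℕ):ℝ) = 2*(k:ℝ) := by push_cast; ring
    rw [e2] at key
    have h1 : 1/(4*(2*(k:ℝ))) = 1/(8*(k:ℝ)) := by ring_nf
    rw [h1] at key
    have h2 : 1/(16*((k:ℝ)+1)) ≤ 1/(16*(k:ℝ)) := by
      apply div_le_div_of_nonneg_left (by norm_num) (by positivity)
      linarith
    push_cast
    calc 1/(16*((k:ℝ)+1)) ≤ 1/(16*(k:ℝ)) := h2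
      _ ≤ |gam * (k:ℝ) + 1/2 - p| := by
          rw [div_le_iff₀ (by positivity)] at key ⊢
          linarith

lemma rr_pos (k : ℕ) : 0 < rr k := lt_of_lt_of_le (by positivity) (rr_lb k)

lemma phi_nonneg (t : ℝ) : 0 ≤ phi t := by
  unfold phi
  have := (distZ_nonneg t).trans (le_max_left (distZ t) (distZ (gam*t+1/2)))
  linarith

lemma phi_le (t : ℝ) : phi t ≤ 1/16 := by
  unfold phi
  have := max_le (distZ_le_half t) (distZ_le_half (gam*t+1/2))
  linarith

lemma phi_lb1 (t : ℝ) : (1/8) * distZ t ≤ phi t := by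
  unfold phi
  have := le_max_left (distZ t) (distZ (gam*t+1/2))
  linarith

lemma phi_lb2 (t : ℝ) : (1/8) * distZ (gam*t+1/2) ≤ phi t := by
  unfold phi
  have := le_max_right (distZ t) (distZ (gam*t+1/2))
  linarith

lemma phi_pos {t : ℝ} (ht : 0 ≤ t) : 0 < phi t := by
  rcases lt_or_eq_of_le (distZ_nonneg t) with h | h
  · calc (0:ℝ) < (1/8) * distZ t := by linarith
      _ ≤ phi t := phi_lb1 t
  · obtain ⟨n, rfl⟩ := (distZ_eq_zero_iff t).1 h.symm
    have hn : 0 ≤ n := by exact_mod_cast ht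
    have hcast : ((n.toNat:ℕ):ℝ) = (n:ℝ) := by
      exact_mod_cast Int.toNat_of_nonneg hn
    have : rr n.toNat = distZ (gam * (n:ℝ) + 1/2) := by
      unfold rr
      rw [hcast]
    calc (0:ℝ) < (1/8) * rr n.toNat := by linarith [rr_pos n.toNat]
      _ = (1/8) * distZ (gam * (n:ℝ) + 1/2) := by rw [this]
      _ ≤ phi (n:ℝ) := phi_lb2 _

lemma phi_lip (s t : ℝ) : |phi s - phi t| ≤ (1/3) * |s - t| := by
  unfold phi
  rw [← mul_sub, abs_mul, abs_of_nonneg (by norm_num : (0:ℝ) ≤ 1/8)]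
  have h := abs_max_sub_max_le_max (distZ s) (distZ (gam*s+1/2)) (distZ t) (distZ (gam*t+1/2))
  have h1 := distZ_dist s t
  have h2 := distZ_dist (gam*s+1/2) (gam*t+1/2)
  have e : |(gam*s+1/2) - (gam*t+1/2)| = gam * |s - t| := by
    rw [show (gam*s+1/2) - (gam*t+1/2) = gam * (s-t) by ring, abs_mul, abs_of_pos gam_pos]
  rw [e] at h2
  have h3 : max |distZ s - distZ t| |distZ (gam*s+1/2) - distZ (gam*t+1/2)| ≤ gam * |s-t| := by
    apply max_le
    · nlinarith [abs_nonneg (s - t), gam_lb]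
    · exact h2
  have := h.trans h3
  nlinarith [abs_nonneg (s-t), gam_ub]

lemma phi_continuous : Continuous phi := by
  have : LipschitzWith 1 phi := by
    apply LipschitzWith.of_dist_le_mul
    intro a b
    rw [Real.dist_eq, Real.dist_eq]
    calc |phi a - phi b| ≤ (1/3) * |a - b| := phi_lip a b
      _ ≤ 1 * |a - b| := by nlinarith [abs_nonneg (a-b)]
  exact this.continuous

/-! ### The orbit -/

def orb : ℕ → ℝ
  | 0 => 0
  | n+1 => orb n + phi (orb n)

lemma orb_nonneg (n : ℕ) : 0 ≤ orb n := by
  induction n with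
  | zero => simp [orb]
  | succ n ih =>
    have := phi_pos ih
    simp only [orb]
    linarith

lemma orb_mono (n : ℕ) : orb n ≤ orb (n+1) := by
  have := phi_pos (orb_nonneg n)
  simp only [orb]
  linarith

lemma orb_le (n : ℕ) : orb n ≤ n * (1/16) := by
  induction n with
  | zero => simp [orb]
  | succ n ih =>
    have := phi_le (orb n)
    simp only [orb]
    push_cast
    linarith

/-! ### The step estimate -/

lemma step_lb {t : ℝ} (ht : 0 ≤ t) :
    2/3 ≤ ∫ u in t..(t + phi t), (phi u)⁻¹ := by
  have hp := phi_pos ht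
  have hab : t ≤ t + phi t := by linarith
  have hbound : ∀ u ∈ Set.Icc t (t + phi t), (3/4) * (phi t)⁻¹ ≤ (phi u)⁻¹ := by
    intro u hu
    have h1 := phi_lip u t
    have h2 : |u - t| ≤ phi t := by
      rw [abs_of_nonneg (by linarith [hu.1])]
      linarith [hu.2]
    have h3 : phi u ≤ (4/3) * phi t := by
      have := (abs_le.1 h1).1
      have := (abs_le.1 h1).2
      nlinarith
    have h4 : 0 < phi u := by
      have := (abs_le.1 h1).1
      nlinarith
    rw [show (3:ℝ)/4 * (phi t)⁻¹ = ((4/3) * phi t)⁻¹ by rw [mul_inv]; ring]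
    exact inv_anti₀ (by positivity) h3
  have hint : IntervalIntegrable (fun u => (phi u)⁻¹) volume t (t + phi t) := by
    apply ContinuousOn.intervalIntegrable
    apply ContinuousOn.inv₀ phi_continuous.continuousOn
    intro u hu
    rw [Set.uIcc_of_le hab] at hu
    exact ne_of_gt (phi_pos (le_trans ht hu.1))
  have hconst : IntervalIntegrable (fun _ => (3/4) * (phi t)⁻¹) volume t (t + phi t) :=
    intervalIntegrable_const
  have := intervalIntegral.integral_mono_on hab hconst hint hbound
  rw [intervalIntegral.integral_const] at this
  have e : (t + phi t - t) • ((3:ℝ)/4 * (phi t)⁻¹) = 3/4 := by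
    rw [smul_eq_mul]
    field_simp
    ring
  rw [e] at this
  linarith

lemma lower_total (n : ℕ) : (2/3) * n ≤ ∫ u in (0:ℝ)..(orb n), (phi u)⁻¹ := by
  have hint : ∀ k < n, IntervalIntegrable (fun u => (phi u)⁻¹) volume (orb k) (orb (k+1)) := by
    intro k _
    apply ContinuousOn.intervalIntegrable
    apply ContinuousOn.inv₀ phi_continuous.continuousOn
    intro u hu
    rw [Set.uIcc_of_le (orb_mono k)] at hu
    exact ne_of_gt (phi_pos (le_trans (orb_nonneg k) hu.1))
  have hsum := intervalIntegral.sum_integral_adjacent_intervals hint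
  have h0 : orb 0 = 0 := rfl
  rw [h0] at hsum
  rw [← hsum]
  have hterm : ∀ k ∈ Finset.range n, (2:ℝ)/3 ≤ ∫ u in (orb k)..(orb (k+1)), (phi u)⁻¹ := by
    intro k _
    have : orb (k+1) = orb k + phi (orb k) := rfl
    rw [this]
    exact step_lb (orb_nonneg k)
  calc (2/3) * (n:ℝ) = ∑ _k ∈ Finset.range n, (2:ℝ)/3 := by
        rw [Finset.sum_const, Finset.card_range]
        push_cast
        ring
    _ ≤ ∑ k ∈ Finset.range n, ∫ u in (orb k)..(orb (k+1)), (phi u)⁻¹ :=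
        Finset.sum_le_sum hterm


/-! ### The cell bound -/

lemma sqrt_dm_le_phi (k : ℕ) (t : ℝ) (hk : (k:ℝ) ≤ t) (hk1 : t ≤ (k:ℝ)+1) :
    Real.sqrt (distZ t * min (rr k) (rr (k+1))) / 24 ≤ phi t := by
  set m := min (rr k) (rr (k+1)) with hm
  have hm0 : 0 < m := lt_min (rr_pos k) (rr_pos (k+1))
  have hmhalf : m ≤ 1/2 := (min_le_left _ _).trans (rr_le_half k)
  set d := distZ t with hd
  have hd0 : 0 ≤ d := distZ_nonneg t
  rcases le_or_gt (m/3) d with hcase | hcase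
  · -- far from integers: phi ≥ d/8 ≥ √(dm)/24
    have h1 : Real.sqrt (d * m) ≤ 3 * d := by
      have : d * m ≤ (3*d)^2 := by nlinarith
      calc Real.sqrt (d*m) ≤ Real.sqrt ((3*d)^2) := Real.sqrt_le_sqrt this
        _ = 3*d := Real.sqrt_sq (by linarith)
    calc Real.sqrt (d*m)/24 ≤ (3*d)/24 := by linarith
      _ = (1/8) * d := by ring
      _ ≤ phi t := phi_lb1 t
  · -- close to an integer k* ∈ {k, k+1}
    have hdr : |t - round t| = d := (distZ_round t).symm
    have hdhalf : d ≤ 1/2 := distZ_le_half t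
    set p := round t with hp
    have habs := abs_le.1 (le_of_eq hdr)
    have hpk : p = (k:ℤ) ∨ p = (k:ℤ)+1 := by
      have h1 : (p:ℝ) ≥ t - 1/2 := by linarith [habs.2, hdhalf]
      have h2 : (p:ℝ) ≤ t + 1/2 := by linarith [habs.1, hdhalf]
      have h3 : ((k:ℤ):ℝ) - 1 < (p:ℝ) := by push_cast; linarith
      have h4 : (p:ℝ) < ((k:ℤ):ℝ) + 2 := by push_cast; linarith
      have h5 : (k:ℤ) - 1 < p := by exact_mod_cast h3
      have h6 : p < (k:ℤ) + 2 := by exact_mod_cast h4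
      omega
    have hge : m ≤ distZ (gam * (p:ℝ) + 1/2) := by
      rcases hpk with hp1 | hp1
      · rw [hp1]
        have : distZ (gam * ((k:ℤ):ℝ) + 1/2) = rr k := by
          unfold rr
          norm_num
        rw [this]
        exact min_le_left _ _
      · rw [hp1]
        have : distZ (gam * (((k:ℤ)+1:ℤ):ℝ) + 1/2) = rr (k+1) := by
          unfold rr
          push_cast
          norm_num
        rw [this]
        exact min_le_right _ _
    have hlip : |distZ (gam*t + 1/2) - distZ (gam*(p:ℝ) + 1/2)| ≤ gam * d := by
      have := distZ_dist (gam*t + 1/2) (gam*(p:ℝ) + 1/2)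
      have e : |(gam*t + 1/2) - (gam*(p:ℝ) + 1/2)| = gam * |t - p| := by
        rw [show (gam*t + 1/2) - (gam*(p:ℝ) + 1/2) = gam * (t - p) by ring, abs_mul,
          abs_of_pos gam_pos]
      rw [e, hdr] at this
      exact this
    have h7 : m/3 ≤ distZ (gam*t + 1/2) := by
      have h8 := (abs_le.1 hlip).1
      have h9 : gam * d ≤ (13/8) * d := by nlinarith [gam_ub]
      nlinarith
    have h10 : Real.sqrt (d*m) ≤ m := by
      have : d * m ≤ m^2 := by nlinarith
      calc Real.sqrt (d*m) ≤ Real.sqrt (m^2) := Real.sqrt_le_sqrt this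
        _ = m := Real.sqrt_sq (le_of_lt hm0)
    calc Real.sqrt (d*m)/24 ≤ m/24 := by linarith
      _ = (1/8) * (m/3) := by ring
      _ ≤ (1/8) * distZ (gam*t+1/2) := by linarith
      _ ≤ phi t := phi_lb2 t


lemma distZ_left_half (k : ℕ) {u : ℝ} (h1 : (k:ℝ) ≤ u) (h2 : u ≤ (k:ℝ)+1/2) :
    distZ u = u - k := by
  have e : u = (u - (k:ℕ)) + ((k:ℤ):ℝ) := by push_cast; ring
  rw [e, distZ_add_int, distZ_of_small (by push_cast; linarith) (by push_cast; linarith)]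
  push_cast
  ring

lemma distZ_right_half (k : ℕ) {u : ℝ} (h1 : (k:ℝ)+1/2 ≤ u) (h2 : u ≤ (k:ℝ)+1) :
    distZ u = (k:ℝ)+1 - u := by
  have e : u = (u - ((k:ℕ)+1)) + (((k:ℤ)+1:ℤ):ℝ) := by push_cast; ring
  rw [e, distZ_add_int]
  have e2 : u - (((k:ℕ):ℝ)+1) = -((((k:ℕ):ℝ))+1 - u) := by ring
  rw [e2, distZ_neg, distZ_of_small (by push_cast; linarith) (by push_cast; linarith)]
  push_cast
  ring

lemma sqrt_half_integral : ∫ u in (0:ℝ)..(1/2:ℝ), u ^ (-(1/2) : ℝ) ≤ 3/2 := by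
  rw [integral_rpow (Or.inl (by norm_num))]
  have h0 : (0:ℝ) ^ ((-(1/2):ℝ) + 1) = 0 := by
    rw [Real.zero_rpow (by norm_num)]
  rw [h0]
  have h1 : ((1:ℝ)/2) ^ ((-(1/2):ℝ) + 1) = Real.sqrt (1/2) := by
    rw [show (-(1/2):ℝ) + 1 = 1/2 by norm_num, ← Real.sqrt_eq_rpow]
  rw [h1]
  have h2 : Real.sqrt (1/2) ≤ 3/4 := by
    calc Real.sqrt (1/2) ≤ Real.sqrt ((3/4)^2) := Real.sqrt_le_sqrt (by norm_num)
      _ = 3/4 := Real.sqrt_sq (by norm_num)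
  rw [sub_zero, show (-(1/2):ℝ)+1 = 1/2 by norm_num, div_le_iff₀ (by norm_num : (0:ℝ) < 1/2)]
  linarith

lemma cell_bound (k : ℕ) :
    ∫ u in (k:ℝ)..((k:ℝ)+1), (phi u)⁻¹
      ≤ 72 * (Real.sqrt (min (rr k) (rr (k+1))))⁻¹ := by
  set m := min (rr k) (rr (k+1)) with hm
  have hm0 : 0 < m := lt_min (rr_pos k) (rr_pos (k+1))
  have hsm : 0 < Real.sqrt m := Real.sqrt_pos.2 hm0
  have hknn : (0:ℝ) ≤ (k:ℝ) := Nat.cast_nonneg k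
  -- integrability of (phi)⁻¹ on subintervals of [k, k+1]
  have hint : ∀ a b : ℝ, (k:ℝ) ≤ a → a ≤ b → b ≤ (k:ℝ)+1 →
      IntervalIntegrable (fun u => (phi u)⁻¹) volume a b := by
    intro a b ha hab hb
    apply ContinuousOn.intervalIntegrable
    apply ContinuousOn.inv₀ phi_continuous.continuousOn
    intro u hu
    rw [Set.uIcc_of_le hab] at hu
    exact ne_of_gt (phi_pos (le_trans (le_trans hknn ha) hu.1))
  have hint1 := hint (k:ℝ) ((k:ℝ)+1/2) (le_refl _) (by linarith) (by linarith)
  have hint2 := hint ((k:ℝ)+1/2) ((k:ℝ)+1) (by linarith) (by linarith) (le_refl _)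
  -- the comparison functions
  set g1 : ℝ → ℝ := fun u => 24 * (Real.sqrt m)⁻¹ * ((u - (k:ℝ)) ^ (-(1/2):ℝ)) with hg1def
  set g2 : ℝ → ℝ := fun u => 24 * (Real.sqrt m)⁻¹ * (((k:ℝ)+1 - u) ^ (-(1/2):ℝ)) with hg2def
  have hgint1 : IntervalIntegrable g1 volume (k:ℝ) ((k:ℝ)+1/2) := by
    have h := ((intervalIntegrable_rpow' (a := 0) (b := 1/2)
      (by norm_num : (-1:ℝ) < -(1/2))).comp_sub_right (k:ℝ)).const_mul (24 * (Real.sqrt m)⁻¹)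
    rw [zero_add] at h
    have e : (1:ℝ)/2 + (k:ℝ) = (k:ℝ)+1/2 := by ring
    rw [e] at h
    exact h
  have hgint2 : IntervalIntegrable g2 volume ((k:ℝ)+1/2) ((k:ℝ)+1) := by
    have h := ((intervalIntegrable_rpow' (a := 0) (b := 1/2)
      (by norm_num : (-1:ℝ) < -(1/2))).comp_sub_left ((k:ℝ)+1)).const_mul (24 * (Real.sqrt m)⁻¹)
    have e1 : (k:ℝ)+1 - 0 = (k:ℝ)+1 := by ring
    have e2 : (k:ℝ)+1 - 1/2 = (k:ℝ)+1/2 := by ring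
    rw [e1, e2] at h
    exact h.symm
  -- pointwise comparison, away from the endpoints
  have hptwise : ∀ u : ℝ, (k:ℝ) ≤ u → u ≤ (k:ℝ)+1 → 0 < distZ u →
      (phi u)⁻¹ ≤ 24 * (Real.sqrt m)⁻¹ * ((distZ u) ^ (-(1/2):ℝ)) := by
    intro u hu1 hu2 hd0
    have hphi := sqrt_dm_le_phi k u hu1 hu2
    rw [← hm] at hphi
    have hsd : 0 < Real.sqrt (distZ u) := Real.sqrt_pos.2 hd0
    have hsdm : 0 < Real.sqrt (distZ u * m) := Real.sqrt_pos.2 (by positivity)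
    have h1 : (phi u)⁻¹ ≤ (Real.sqrt (distZ u * m) / 24)⁻¹ :=
      inv_anti₀ (by positivity) hphi
    have h2 : (Real.sqrt (distZ u * m) / 24)⁻¹ = 24 * (Real.sqrt (distZ u * m))⁻¹ := by
      field_simp
    have h3 : (Real.sqrt (distZ u * m))⁻¹ = (Real.sqrt m)⁻¹ * ((distZ u) ^ (-(1/2):ℝ)) := by
      rw [Real.sqrt_mul (distZ_nonneg u), mul_inv, Real.rpow_neg (distZ_nonneg u),
        ← Real.sqrt_eq_rpow]
      ring
    rw [h2, h3] at h1
    rw [← mul_assoc] at h1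
    exact h1
  -- first piece
  have hpiece1 : ∫ u in (k:ℝ)..((k:ℝ)+1/2), (phi u)⁻¹ ≤ 36 * (Real.sqrt m)⁻¹ := by
    have hcmp : ∫ u in (k:ℝ)..((k:ℝ)+1/2), (phi u)⁻¹ ≤ ∫ u in (k:ℝ)..((k:ℝ)+1/2), g1 u := by
      apply intervalIntegral.integral_mono_ae_restrict (by linarith) hint1 hgint1
      have hae1 : ∀ᵐ u ∂(volume.restrict (Icc (k:ℝ) ((k:ℝ)+1/2))), u ∉ ({(k:ℝ)} : Set ℝ) :=
        Filter.Eventually.filter_mono (MeasureTheory.ae_mono MeasureTheory.Measure.restrict_le_self)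
          ((Set.countable_singleton ((k:ℝ))).ae_notMem _)
      have hae2 : ∀ᵐ u ∂(volume.restrict (Icc (k:ℝ) ((k:ℝ)+1/2))), u ∈ Icc (k:ℝ) ((k:ℝ)+1/2) :=
        MeasureTheory.ae_restrict_mem measurableSet_Icc
      filter_upwards [hae1, hae2] with u hu1 hu2
      have hune : u ≠ (k:ℝ) := by simpa using hu1
      have hlt : (k:ℝ) < u := lt_of_le_of_ne hu2.1 (Ne.symm hune)
      have hd : distZ u = u - (k:ℝ) := distZ_left_half k hu2.1 hu2.2
      have := hptwise u hu2.1 (by linarith [hu2.2]) (by rw [hd]; linarith)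
      rw [hd] at this
      exact this
    have hval : ∫ u in (k:ℝ)..((k:ℝ)+1/2), g1 u ≤ 36 * (Real.sqrt m)⁻¹ := by
      rw [hg1def]
      rw [intervalIntegral.integral_const_mul]
      have e : ∫ u in (k:ℝ)..((k:ℝ)+1/2), ((u - (k:ℝ)) ^ (-(1/2):ℝ))
          = ∫ u in (0:ℝ)..(1/2:ℝ), u ^ (-(1/2):ℝ) := by
        have := intervalIntegral.integral_comp_sub_right (a := (k:ℝ)) (b := (k:ℝ)+1/2)
          (fun u => u ^ (-(1/2):ℝ)) (k:ℝ)
        rw [this]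
        norm_num
      rw [e]
      have h24 : (0:ℝ) ≤ 24 * (Real.sqrt m)⁻¹ := by positivity
      calc 24 * (Real.sqrt m)⁻¹ * ∫ u in (0:ℝ)..(1/2:ℝ), u ^ (-(1/2):ℝ)
          ≤ 24 * (Real.sqrt m)⁻¹ * (3/2) := by
            apply mul_le_mul_of_nonneg_left sqrt_half_integral h24
        _ = 36 * (Real.sqrt m)⁻¹ := by ring
    linarith
  -- second piece
  have hpiece2 : ∫ u in ((k:ℝ)+1/2)..((k:ℝ)+1), (phi u)⁻¹ ≤ 36 * (Real.sqrt m)⁻¹ := by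
    have hcmp : ∫ u in ((k:ℝ)+1/2)..((k:ℝ)+1), (phi u)⁻¹
        ≤ ∫ u in ((k:ℝ)+1/2)..((k:ℝ)+1), g2 u := by
      apply intervalIntegral.integral_mono_ae_restrict (by linarith) hint2 hgint2
      have hae1 : ∀ᵐ u ∂(volume.restrict (Icc ((k:ℝ)+1/2) ((k:ℝ)+1))),
          u ∉ ({((k:ℝ)+1)} : Set ℝ) :=
        Filter.Eventually.filter_mono (MeasureTheory.ae_mono MeasureTheory.Measure.restrict_le_self)
          ((Set.countable_singleton ((k:ℝ)+1)).ae_notMem _)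
      have hae2 : ∀ᵐ u ∂(volume.restrict (Icc ((k:ℝ)+1/2) ((k:ℝ)+1))),
          u ∈ Icc ((k:ℝ)+1/2) ((k:ℝ)+1) :=
        MeasureTheory.ae_restrict_mem measurableSet_Icc
      filter_upwards [hae1, hae2] with u hu1 hu2
      have hune : u ≠ (k:ℝ)+1 := by simpa using hu1
      have hlt : u < (k:ℝ)+1 := lt_of_le_of_ne hu2.2 hune
      have hd : distZ u = (k:ℝ)+1 - u := distZ_right_half k hu2.1 hu2.2
      have := hptwise u (by linarith [hu2.1]) hu2.2 (by rw [hd]; linarith)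
      rw [hd] at this
      exact this
    have hval : ∫ u in ((k:ℝ)+1/2)..((k:ℝ)+1), g2 u ≤ 36 * (Real.sqrt m)⁻¹ := by
      rw [hg2def]
      rw [intervalIntegral.integral_const_mul]
      have e : ∫ u in ((k:ℝ)+1/2)..((k:ℝ)+1), (((k:ℝ)+1 - u) ^ (-(1/2):ℝ))
          = ∫ u in (0:ℝ)..(1/2:ℝ), u ^ (-(1/2):ℝ) := by
        have := intervalIntegral.integral_comp_sub_left (a := (k:ℝ)+1/2) (b := (k:ℝ)+1)
          (fun u => u ^ (-(1/2):ℝ)) ((k:ℝ)+1)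
        rw [this]
        norm_num
      rw [e]
      have h24 : (0:ℝ) ≤ 24 * (Real.sqrt m)⁻¹ := by positivity
      calc 24 * (Real.sqrt m)⁻¹ * ∫ u in (0:ℝ)..(1/2:ℝ), u ^ (-(1/2):ℝ)
          ≤ 24 * (Real.sqrt m)⁻¹ * (3/2) := by
            apply mul_le_mul_of_nonneg_left sqrt_half_integral h24
        _ = 36 * (Real.sqrt m)⁻¹ := by ring
    linarith
  have hsplit := intervalIntegral.integral_add_adjacent_intervals hint1 hint2
  rw [← hsplit]
  linarith


/-! ### The square-root sum estimate -/

lemma sumsqrtinv (N : ℕ) : ∑ i ∈ Finset.range (N+1), (Real.sqrt i)⁻¹ ≤ 2 * Real.sqrt N := by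
  induction N with
  | zero => simp
  | succ N ih =>
    rw [Finset.sum_range_succ]
    have hkey : (Real.sqrt (N+1))⁻¹ ≤ 2 * Real.sqrt (N+1) - 2 * Real.sqrt N := by
      have ha : (0:ℝ) ≤ Real.sqrt N := Real.sqrt_nonneg _
      have hb : (0:ℝ) < Real.sqrt (N+1) := Real.sqrt_pos.2 (by positivity)
      have ha2 : (Real.sqrt N)^2 = N := Real.sq_sqrt (Nat.cast_nonneg N)
      have hb2 : (Real.sqrt (N+1))^2 = (N:ℝ)+1 := by
        have := Real.sq_sqrt (by positivity : (0:ℝ) ≤ (N:ℝ)+1)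
        rwa [show ((N:ℝ)+1) = ((N+1:ℕ):ℝ) by push_cast; ring] at this ⊢
      rw [inv_le_iff_one_le_mul₀ hb]
      nlinarith [sq_nonneg (Real.sqrt (N+1) - Real.sqrt N)]
    push_cast
    push_cast at ih hkey
    linarith

/-- Sum of inverse square roots of `rr` is linear in `T`. -/
lemma sqrtsum (T : ℕ) (hT : 1 ≤ T) :
    ∑ k ∈ Finset.range (T+1), (Real.sqrt (rr k))⁻¹ ≤ 32 * ((T:ℝ)+1) := by
  have hTR : (1:ℝ) ≤ (T:ℝ) := by exact_mod_cast hT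
  set uu : ℕ → ℝ := fun k => gam * k + 1/2 - round (gam * k + 1/2) with huu
  have hrr_uu : ∀ k, rr k = |uu k| := by
    intro k
    rw [huu]
    exact distZ_round _
  have huu_half : ∀ k, |uu k| ≤ 1/2 := by
    intro k
    rw [← hrr_uu]
    exact rr_le_half k
  set jf : ℕ → ℤ := fun k => ⌊uu k * (4*T)⌋ with hjf
  -- injectivity
  have hinj : ∀ k ∈ Finset.range (T+1), ∀ k' ∈ Finset.range (T+1), jf k = jf k' → k = k' := by
    have haux : ∀ k k' : ℕ, k < k' → k' ≤ T → jf k ≠ jf k' := by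
      intro k k' hkk' hk'T heq
      have h4T : (0:ℝ) < 4*T := by linarith
      -- same floor means difference < 1
      have hlt : |uu k * (4*T) - uu k' * (4*T)| < 1 := by
        have h1 := Int.floor_le (uu k * (4*T))
        have h2 := Int.lt_floor_add_one (uu k * (4*T))
        have h3 := Int.floor_le (uu k' * (4*(T:ℝ)))
        have h4 := Int.lt_floor_add_one (uu k' * (4*(T:ℝ)))
        have heq2 : ⌊uu k * (4*(T:ℝ))⌋ = ⌊uu k' * (4*(T:ℝ))⌋ := heq
        rw [heq2] at h1 h2
        rw [abs_lt]
        constructor <;> linarith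
      have hlt2 : |uu k - uu k'| < 1/(4*T) := by
        have e : uu k * (4*T) - uu k' * (4*T) = (uu k - uu k') * (4*T) := by ring
        rw [e, abs_mul, abs_of_pos h4T] at hlt
        rw [lt_div_iff₀ h4T]
        exact hlt
      -- Diophantine lower bound
      set q : ℕ := k' - k with hq
      have hq1 : 1 ≤ q := by omega
      have hqT : q ≤ T := by omega
      set p : ℤ := round (gam * k' + 1/2) - round (gam * k + 1/2) with hp
      have he : uu k' - uu k = (q:ℝ) * gam - p := by
        rw [huu, hp, hq]
        push_cast [Nat.cast_sub (le_of_lt hkk')]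
        ring
      have hdio := gam_dioph q hq1 p
      have : 1/(4*(q:ℝ)) ≤ |uu k - uu k'| := by
        rw [abs_sub_comm, he]
        exact hdio
      have hqle : 1/(4*(T:ℝ)) ≤ 1/(4*(q:ℝ)) := by
        apply div_le_div_of_nonneg_left (by norm_num) (by positivity)
        have : (q:ℝ) ≤ (T:ℝ) := by exact_mod_cast hqT
        linarith
      linarith
    intro k hk k' hk' heq
    rcases lt_trichotomy k k' with h | h | h
    · exact absurd heq (haux k k' h (by simpa using Nat.lt_succ_iff.1 (Finset.mem_range.1 hk')))
    · exact h
    · exact absurd heq.symm (haux k' k h (by simpa using Nat.lt_succ_iff.1 (Finset.mem_range.1 hk)))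
  -- the bounding function
  set B : ℤ → ℝ := fun j => if j.natAbs ≤ 1 then 4 * Real.sqrt ((T:ℝ)+1)
      else 2 * Real.sqrt T * (Real.sqrt ((j.natAbs - 1 : ℕ)))⁻¹ with hB
  have hBnonneg : ∀ j, 0 ≤ B j := by
    intro j
    rw [hB]
    dsimp only
    split <;> positivity
  have hBneg : ∀ j, B (-j) = B j := by
    intro j
    rw [hB]
    simp [Int.natAbs_neg]
  -- per-k bound
  have hperk : ∀ k ∈ Finset.range (T+1), (Real.sqrt (rr k))⁻¹ ≤ B (jf k) := by
    intro k hk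
    have hkT : k ≤ T := Nat.lt_succ_iff.1 (Finset.mem_range.1 hk)
    have hrpos := rr_pos k
    have hsr : 0 < Real.sqrt (rr k) := Real.sqrt_pos.2 hrpos
    rw [hB]
    dsimp only
    split
    case isTrue h =>
      -- use rr k ≥ 1/(16(T+1))
      have h1 : 1/(16*((T:ℝ)+1)) ≤ rr k := by
        refine le_trans ?_ (rr_lb k)
        apply div_le_div_of_nonneg_left (by norm_num) (by positivity)
        have : (k:ℝ) ≤ T := by exact_mod_cast hkT
        linarith
      have h2 : Real.sqrt (1/(16*((T:ℝ)+1))) ≤ Real.sqrt (rr k) := Real.sqrt_le_sqrt h1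
      have h3 : (Real.sqrt (rr k))⁻¹ ≤ (Real.sqrt (1/(16*((T:ℝ)+1))))⁻¹ :=
        inv_anti₀ (Real.sqrt_pos.2 (by positivity)) h2
      have h4 : (Real.sqrt (1/(16*((T:ℝ)+1))))⁻¹ = Real.sqrt (16*((T:ℝ)+1)) := by
        rw [one_div, Real.sqrt_inv, inv_inv]
      have h5 : Real.sqrt (16*((T:ℝ)+1)) = 4 * Real.sqrt ((T:ℝ)+1) := by
        rw [Real.sqrt_mul (by norm_num), show Real.sqrt 16 = 4 by
          rw [show (16:ℝ) = 4^2 by norm_num, Real.sqrt_sq (by norm_num)]]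
      rw [h4, h5] at h3
      exact h3
    case isFalse h =>
      push_neg at h
      have h2le : 2 ≤ (jf k).natAbs := h
      set i : ℕ := (jf k).natAbs - 1 with hi
      have hi1 : 1 ≤ i := by omega
      have hiR : (1:ℝ) ≤ (i:ℝ) := by exact_mod_cast hi1
      have hsqT : (0:ℝ) < Real.sqrt T := Real.sqrt_pos.2 (by linarith)
      have hsqi : (0:ℝ) < Real.sqrt i := Real.sqrt_pos.2 (by linarith)
      -- rr k ≥ i/(4T)
      have hrlb : (i:ℝ)/(4*T) ≤ rr k := by
        rcases le_or_gt 0 (jf k) with hjpos | hjneg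
        · -- jf k ≥ 2
          have hfl := Int.floor_le (uu k * (4*(T:ℝ)))
          have hicast : ((i:ℕ):ℝ) ≤ ((jf k : ℤ):ℝ) := by
            have : ((i:ℕ):ℤ) ≤ jf k := by omega
            exact_mod_cast this
          have hupos : (i:ℝ)/(4*T) ≤ uu k := by
            rw [div_le_iff₀ (by positivity)]
            calc (i:ℝ) ≤ ((jf k : ℤ):ℝ) := hicast
              _ ≤ uu k * (4*(T:ℝ)) := hfl
          have huk0 : 0 ≤ uu k := le_trans (by positivity) hupos
          rw [hrr_uu, abs_of_nonneg huk0]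
          exact hupos
        · -- jf k ≤ -2
          have hfl := Int.lt_floor_add_one (uu k * (4*(T:ℝ)))
          have hicast : ((jf k : ℤ):ℝ) + 1 ≤ -((i:ℕ):ℝ) := by
            have : jf k + 1 ≤ -((i:ℕ):ℤ) := by omega
            have h2 : ((jf k + 1 : ℤ):ℝ) ≤ ((-(i:ℕ) : ℤ):ℝ) := by exact_mod_cast this
            push_cast at h2
            push_cast
            linarith
          have hub : uu k < -((i:ℝ))/(4*T) := by
            rw [lt_div_iff₀ (by positivity)]
            calc uu k * (4*(T:ℝ)) < ((jf k : ℤ):ℝ) + 1 := hfl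
              _ ≤ -((i:ℕ):ℝ) := hicast
          have huneg : uu k < 0 := lt_of_lt_of_le hub (by
            apply div_nonpos_of_nonpos_of_nonneg <;> [linarith; positivity])
          rw [hrr_uu, abs_of_neg huneg]
          have : -((i:ℝ))/(4*T) = -((i:ℝ)/(4*T)) := by ring
          rw [this] at hub
          linarith
      have hs1 : Real.sqrt ((i:ℝ)/(4*T)) ≤ Real.sqrt (rr k) := Real.sqrt_le_sqrt hrlb
      have hs2 : Real.sqrt ((i:ℝ)/(4*T)) = Real.sqrt i / (2 * Real.sqrt T) := by
        rw [show (i:ℝ)/(4*T) = (i:ℝ) * (4*(T:ℝ))⁻¹ by ring,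
          Real.sqrt_mul (Nat.cast_nonneg i), Real.sqrt_inv,
          show (4:ℝ)*(T:ℝ) = 4*(T:ℝ) from rfl,
          Real.sqrt_mul (by norm_num : (0:ℝ) ≤ 4),
          show Real.sqrt 4 = 2 by rw [show (4:ℝ) = 2^2 by norm_num, Real.sqrt_sq (by norm_num)]]
        ring
      have hspos : (0:ℝ) < Real.sqrt ((i:ℝ)/(4*T)) := by
        rw [hs2]
        positivity
      have h6 : (Real.sqrt (rr k))⁻¹ ≤ (Real.sqrt ((i:ℝ)/(4*T)))⁻¹ := inv_anti₀ hspos hs1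
      have h7 : (Real.sqrt ((i:ℝ)/(4*T)))⁻¹ = 2 * Real.sqrt T * (Real.sqrt i)⁻¹ := by
        rw [hs2]
        field_simp
      rw [h7] at h6
      exact h6
  -- image is contained in a bounded interval
  have himgsub : (Finset.range (T+1)).image jf ⊆ Finset.Icc (-(2*(T:ℤ)+1)) (2*(T:ℤ)+1) := by
    intro j hj
    obtain ⟨k, _, rfl⟩ := Finset.mem_image.1 hj
    have hb := huu_half k
    have habs := abs_le.1 hb
    rw [Finset.mem_Icc]
    constructor
    · apply Int.le_floor.2
      push_cast
      show (-(2*(T:ℝ)+1)) ≤ uu k * (4*(T:ℝ))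
      have hm := mul_le_mul_of_nonneg_right habs.1 (by positivity : (0:ℝ) ≤ 4*(T:ℝ))
      have h2T : (-(2*(T:ℝ)+1)) ≤ -(1/2) * (4*(T:ℝ)) := by nlinarith
      exact le_trans h2T hm
    · have h1 := Int.floor_le (uu k * (4*(T:ℝ)))
      have h2 : ((jf k : ℤ):ℝ) ≤ 2*(T:ℝ)+1 := by
        calc ((jf k : ℤ):ℝ) ≤ uu k * (4*(T:ℝ)) := h1
          _ ≤ 2*(T:ℝ)+1 := by
              have hm := mul_le_mul_of_nonneg_right habs.2 (by positivity : (0:ℝ) ≤ 4*(T:ℝ))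
              have h2T : (1:ℝ)/2 * (4*(T:ℝ)) ≤ 2*(T:ℝ)+1 := by nlinarith
              exact le_trans hm h2T
      exact_mod_cast h2
  -- summing up
  set N : ℕ := 2*T+1 with hN
  set S1 : Finset ℤ := (Finset.range (N+1)).image (fun i : ℕ => (i:ℤ)) with hS1
  set S2 : Finset ℤ := (Finset.range (N+1)).image (fun i : ℕ => -(i:ℤ)) with hS2
  have hIccsub : Finset.Icc (-(2*(T:ℤ)+1)) (2*(T:ℤ)+1) ⊆ S1 ∪ S2 := by
    intro j hj
    rw [Finset.mem_Icc] at hj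
    have hna : j.natAbs ≤ N := by omega
    rcases le_or_gt 0 j with hj0 | hj0
    · apply Finset.mem_union_left
      rw [hS1, Finset.mem_image]
      exact ⟨j.natAbs, Finset.mem_range.2 (by omega), by omega⟩
    · apply Finset.mem_union_right
      rw [hS2, Finset.mem_image]
      exact ⟨j.natAbs, Finset.mem_range.2 (by omega), by omega⟩
  have hsum1 : ∑ j ∈ S1, B j = ∑ i ∈ Finset.range (N+1), B (i:ℤ) := by
    rw [hS1]
    apply Finset.sum_image
    intro a _ b _ hab
    exact Nat.cast_injective hab
  have hsum2 : ∑ j ∈ S2, B j = ∑ i ∈ Finset.range (N+1), B (i:ℤ) := by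
    rw [hS2]
    rw [Finset.sum_image (by intro a _ b _ hab; simp only at hab; omega)]
    exact Finset.sum_congr rfl (fun i _ => hBneg i)
  -- bound the one-sided sum
  have honesided : ∑ i ∈ Finset.range (N+1), B (i:ℤ) ≤ 8*((T:ℝ)+1) + 8*T := by
    have hsplit : ∀ i ∈ Finset.range (N+1), B (i:ℤ) ≤
        (if i ≤ 1 then 4 * Real.sqrt ((T:ℝ)+1) else 0)
          + 2 * Real.sqrt T * (Real.sqrt ((i - 1 : ℕ)))⁻¹ := by
      intro i _
      rw [hB]
      dsimp only
      simp only [Int.natAbs_natCast]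
      split
      case isTrue h =>
        have : (0:ℝ) ≤ 2 * Real.sqrt T * (Real.sqrt ((i - 1 : ℕ)))⁻¹ := by positivity
        linarith
      case isFalse h =>
        linarith
    have h1 := Finset.sum_le_sum hsplit
    rw [Finset.sum_add_distrib] at h1
    have h2 : ∑ i ∈ Finset.range (N+1), (if i ≤ 1 then 4 * Real.sqrt ((T:ℝ)+1) else 0)
        ≤ 8 * ((T:ℝ)+1) := by
      rw [← Finset.sum_filter]
      have hcard : (Finset.filter (fun i => i ≤ 1) (Finset.range (N+1))).card ≤ 2 := by
        have : Finset.filter (fun i => i ≤ 1) (Finset.range (N+1)) ⊆ Finset.range 2 := by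
          intro x hx
          rw [Finset.mem_filter] at hx
          exact Finset.mem_range.2 (by omega)
        calc _ ≤ (Finset.range 2).card := Finset.card_le_card this
          _ = 2 := Finset.card_range 2
      rw [Finset.sum_const]
      have hsq : Real.sqrt ((T:ℝ)+1) ≤ (T:ℝ)+1 := by
        calc Real.sqrt ((T:ℝ)+1) ≤ Real.sqrt (((T:ℝ)+1)^2) := by
              apply Real.sqrt_le_sqrt
              nlinarith
          _ = (T:ℝ)+1 := Real.sqrt_sq (by linarith)
      calc (Finset.filter (fun i => i ≤ 1) (Finset.range (N+1))).card • (4 * Real.sqrt ((T:ℝ)+1))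
          ≤ 2 * (4 * Real.sqrt ((T:ℝ)+1)) := by
            rw [nsmul_eq_mul]
            apply mul_le_mul_of_nonneg_right _ (by positivity)
            exact_mod_cast hcard
        _ ≤ 8 * ((T:ℝ)+1) := by nlinarith
    have h3 : ∑ i ∈ Finset.range (N+1), 2 * Real.sqrt T * (Real.sqrt ((i - 1 : ℕ)))⁻¹
        ≤ 8 * (T:ℝ) := by
      have e : ∑ i ∈ Finset.range (N+1), 2 * Real.sqrt T * (Real.sqrt ((i - 1 : ℕ)))⁻¹
          = 2 * Real.sqrt T * ∑ i ∈ Finset.range (N+1), (Real.sqrt ((i - 1 : ℕ)))⁻¹ := by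
        rw [Finset.mul_sum]
      rw [e]
      have e2 : ∑ i ∈ Finset.range (N+1), (Real.sqrt ((i - 1 : ℕ)))⁻¹
          = ∑ i ∈ Finset.range N, (Real.sqrt (i:ℝ))⁻¹ := by
        rw [Finset.sum_range_succ']
        simp
      rw [e2, hN]
      have h4 : ∑ i ∈ Finset.range (2*T+1), (Real.sqrt (i:ℝ))⁻¹ ≤ 2 * Real.sqrt (2*(T:ℝ)) := by
        have h40 := sumsqrtinv (2*T)
        have e40 : ((2*T:ℕ):ℝ) = 2*(T:ℝ) := by push_cast; ring
        rw [e40] at h40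
        exact h40
      have h5 : Real.sqrt T * Real.sqrt (2*(T:ℝ)) ≤ 2*(T:ℝ) := by
        have ha : Real.sqrt T ≤ Real.sqrt (2*(T:ℝ)) := Real.sqrt_le_sqrt (by linarith)
        have hb : (Real.sqrt (2*(T:ℝ)))^2 = 2*(T:ℝ) := Real.sq_sqrt (by linarith)
        nlinarith [Real.sqrt_nonneg (2*(T:ℝ)), Real.sqrt_nonneg (T:ℝ)]
      have hsT := Real.sqrt_nonneg (T:ℝ)
      nlinarith [h4, Real.sqrt_nonneg (2*(T:ℝ))]
    linarith
  -- final chain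
  calc ∑ k ∈ Finset.range (T+1), (Real.sqrt (rr k))⁻¹
      ≤ ∑ k ∈ Finset.range (T+1), B (jf k) := Finset.sum_le_sum hperk
    _ = ∑ j ∈ (Finset.range (T+1)).image jf, B j := (Finset.sum_image hinj).symm
    _ ≤ ∑ j ∈ Finset.Icc (-(2*(T:ℤ)+1)) (2*(T:ℤ)+1), B j :=
        Finset.sum_le_sum_of_subset_of_nonneg himgsub (fun j _ _ => hBnonneg j)
    _ ≤ ∑ j ∈ S1 ∪ S2, B j :=
        Finset.sum_le_sum_of_subset_of_nonneg hIccsub (fun j _ _ => hBnonneg j)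
    _ ≤ ∑ j ∈ S1, B j + ∑ j ∈ S2, B j := by
        have := Finset.sum_union_inter (s₁ := S1) (s₂ := S2) (f := B)
        have hnn : 0 ≤ ∑ j ∈ S1 ∩ S2, B j := Finset.sum_nonneg (fun j _ => hBnonneg j)
        linarith
    _ = 2 * (∑ i ∈ Finset.range (N+1), B (i:ℤ)) := by rw [hsum1, hsum2]; ring
    _ ≤ 2 * (8*((T:ℝ)+1) + 8*T) := by linarith [honesided]
    _ ≤ 32 * ((T:ℝ)+1) := by linarith


/-! ### Total upper bound and linear growth of the orbit -/

lemma upper_total (T : ℕ) (hT : 1 ≤ T) :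
    ∫ u in (0:ℝ)..(T:ℝ), (phi u)⁻¹ ≤ 4608 * ((T:ℝ)+1) := by
  have hint : ∀ k, k < T → IntervalIntegrable (fun u => (phi u)⁻¹) volume ((k:ℕ):ℝ) ((k:ℝ)+1) := by
    intro k _
    apply ContinuousOn.intervalIntegrable
    apply ContinuousOn.inv₀ phi_continuous.continuousOn
    intro u hu
    rw [Set.uIcc_of_le (by linarith [Nat.cast_nonneg (α := ℝ) k] : ((k:ℕ):ℝ) ≤ (k:ℝ)+1)] at hu
    exact ne_of_gt (phi_pos (le_trans (Nat.cast_nonneg k) hu.1))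
  have hint' : ∀ k, k < T → IntervalIntegrable (fun u => (phi u)⁻¹) volume
      ((fun i : ℕ => (i:ℝ)) k) ((fun i : ℕ => (i:ℝ)) (k+1)) := by
    intro k hk
    have := hint k hk
    simpa [Nat.cast_succ] using this
  have hsum := intervalIntegral.sum_integral_adjacent_intervals (a := fun i : ℕ => (i:ℝ))
    (μ := volume) (f := fun u => (phi u)⁻¹) (n := T) hint'
  simp only [Nat.cast_zero] at hsum
  rw [← hsum]
  have hterm : ∀ k ∈ Finset.range T,
      ∫ u in ((k:ℕ):ℝ)..((k+1:ℕ):ℝ), (phi u)⁻¹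
        ≤ 72 * ((Real.sqrt (rr k))⁻¹ + (Real.sqrt (rr (k+1)))⁻¹) := by
    intro k _
    have h1 : ∫ u in ((k:ℕ):ℝ)..((k+1:ℕ):ℝ), (phi u)⁻¹
        = ∫ u in ((k:ℕ):ℝ)..((k:ℝ)+1), (phi u)⁻¹ := by
      norm_num
    rw [h1]
    refine (cell_bound k).trans ?_
    have hmin : (Real.sqrt (min (rr k) (rr (k+1))))⁻¹
        ≤ (Real.sqrt (rr k))⁻¹ + (Real.sqrt (rr (k+1)))⁻¹ := by
      rcases min_choice (rr k) (rr (k+1)) with h | h <;> rw [h]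
      · have : (0:ℝ) ≤ (Real.sqrt (rr (k+1)))⁻¹ := by positivity
        linarith
      · have : (0:ℝ) ≤ (Real.sqrt (rr k))⁻¹ := by positivity
        linarith
    linarith
  have hsum2 : ∑ k ∈ Finset.range T, (∫ u in ((k:ℕ):ℝ)..((k+1:ℕ):ℝ), (phi u)⁻¹)
      ≤ ∑ k ∈ Finset.range T, 72 * ((Real.sqrt (rr k))⁻¹ + (Real.sqrt (rr (k+1)))⁻¹) :=
    Finset.sum_le_sum hterm
  have hsum3 : ∑ k ∈ Finset.range T, 72 * ((Real.sqrt (rr k))⁻¹ + (Real.sqrt (rr (k+1)))⁻¹)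
      ≤ 144 * ∑ k ∈ Finset.range (T+1), (Real.sqrt (rr k))⁻¹ := by
    have e : ∑ k ∈ Finset.range T, 72 * ((Real.sqrt (rr k))⁻¹ + (Real.sqrt (rr (k+1)))⁻¹)
        = 72 * ((∑ k ∈ Finset.range T, (Real.sqrt (rr k))⁻¹)
          + ∑ k ∈ Finset.range T, (Real.sqrt (rr (k+1)))⁻¹) := by
      rw [← Finset.sum_add_distrib, Finset.mul_sum]
    rw [e]
    have hnn : ∀ k ∈ Finset.range (T+1), (0:ℝ) ≤ (Real.sqrt (rr k))⁻¹ := by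
      intro k _
      positivity
    have h1 : ∑ k ∈ Finset.range T, (Real.sqrt (rr k))⁻¹
        ≤ ∑ k ∈ Finset.range (T+1), (Real.sqrt (rr k))⁻¹ :=
      Finset.sum_le_sum_of_subset_of_nonneg
        (Finset.range_subset_range.2 (by omega)) (fun k hk _ => hnn k hk)
    have h2 : ∑ k ∈ Finset.range T, (Real.sqrt (rr (k+1)))⁻¹
        ≤ ∑ k ∈ Finset.range (T+1), (Real.sqrt (rr k))⁻¹ := by
      rw [Finset.sum_range_succ' (fun k => (Real.sqrt (rr k))⁻¹) T]
      have : (0:ℝ) ≤ (Real.sqrt (rr 0))⁻¹ := by positivity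
      linarith
    linarith
  have hfinal := sqrtsum T hT
  calc ∑ k ∈ Finset.range T, ∫ u in ((fun i : ℕ => (i:ℝ)) k)..((fun i : ℕ => (i:ℝ)) (k+1)), (phi u)⁻¹
      = ∑ k ∈ Finset.range T, ∫ u in ((k:ℕ):ℝ)..((k+1:ℕ):ℝ), (phi u)⁻¹ := rfl
    _ ≤ 144 * ∑ k ∈ Finset.range (T+1), (Real.sqrt (rr k))⁻¹ := le_trans hsum2 hsum3
    _ ≤ 144 * (32 * ((T:ℝ)+1)) := by linarith [hfinal]
    _ = 4608 * ((T:ℝ)+1) := by ring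

lemma orbit_linear (n : ℕ) (hn : 41472 ≤ n) : (n:ℝ)/13824 ≤ orb n := by
  have hlow := lower_total n
  set T : ℕ := max 1 ⌈orb n⌉₊ with hTdef
  have hT1 : 1 ≤ T := le_max_left 1 _
  have horbT : orb n ≤ (T:ℝ) := by
    calc orb n ≤ (⌈orb n⌉₊ : ℝ) := Nat.le_ceil _
      _ ≤ (T:ℝ) := by exact_mod_cast le_max_right 1 ⌈orb n⌉₊
  have hTle : (T:ℝ) ≤ orb n + 2 := by
    have hceil : (⌈orb n⌉₊:ℝ) < orb n + 1 := Nat.ceil_lt_add_one (orb_nonneg n)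
    have h1 : ((max 1 ⌈orb n⌉₊ : ℕ):ℝ) = max (1:ℝ) (⌈orb n⌉₊:ℝ) := by
      push_cast
      rfl
    rw [hTdef, h1]
    apply max_le
    · linarith [orb_nonneg n]
    · linarith
  have hmono : ∫ u in (0:ℝ)..(orb n), (phi u)⁻¹ ≤ ∫ u in (0:ℝ)..(T:ℝ), (phi u)⁻¹ := by
    have hint1 : IntervalIntegrable (fun u => (phi u)⁻¹) volume 0 (orb n) := by
      apply ContinuousOn.intervalIntegrable
      apply ContinuousOn.inv₀ phi_continuous.continuousOn
      intro u hu
      rw [Set.uIcc_of_le (orb_nonneg n)] at hu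
      exact ne_of_gt (phi_pos hu.1)
    have hint2 : IntervalIntegrable (fun u => (phi u)⁻¹) volume (orb n) (T:ℝ) := by
      apply ContinuousOn.intervalIntegrable
      apply ContinuousOn.inv₀ phi_continuous.continuousOn
      intro u hu
      rw [Set.uIcc_of_le horbT] at hu
      exact ne_of_gt (phi_pos (le_trans (orb_nonneg n) hu.1))
    have hadd := intervalIntegral.integral_add_adjacent_intervals hint1 hint2
    have hnn : 0 ≤ ∫ u in (orb n)..(T:ℝ), (phi u)⁻¹ :=
      intervalIntegral.integral_nonneg horbT (fun u _ => inv_nonneg.2 (phi_nonneg u))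
    linarith
  have hup := upper_total T hT1
  have hchain : (2/3) * (n:ℝ) ≤ 4608 * (orb n + 3) := by
    calc (2/3) * (n:ℝ) ≤ ∫ u in (0:ℝ)..(orb n), (phi u)⁻¹ := hlow
      _ ≤ ∫ u in (0:ℝ)..(T:ℝ), (phi u)⁻¹ := hmono
      _ ≤ 4608 * ((T:ℝ)+1) := hup
      _ ≤ 4608 * (orb n + 3) := by linarith
  have hnR : (41472:ℝ) ≤ (n:ℝ) := by exact_mod_cast hn
  linarith [hchain]


/-! ### Connecting the orbit to the displacement -/

lemma phi_eq_psi (t : ℝ) : phi t = psi (t, gam*t + 1/2) := rfl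

lemma orbit_iter (n : ℕ) : Fmap^[n] ((0:ℝ), (1/2:ℝ)) = (orb n, gam * orb n + 1/2) := by
  induction n with
  | zero =>
    simp only [Function.iterate_zero, id_eq]
    rw [show orb 0 = 0 from rfl]
    norm_num
  | succ n ih =>
    rw [Function.iterate_succ_apply', ih, Fmap_def, ← phi_eq_psi]
    have e : orb (n+1) = orb n + phi (orb n) := rfl
    rw [e]
    unfold vv
    rw [Prod.ext_iff]
    constructor
    · simp only [Prod.fst_add, Prod.smul_fst, smul_eq_mul]
      ring
    · simp only [Prod.snd_add, Prod.smul_snd, smul_eq_mul]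
      ring

lemma sig_half (n : ℕ) : sig n ((0:ℝ), (1/2:ℝ)) = orb n := by
  unfold sig
  rw [orbit_iter]
  simp

lemma aseq_big : ∀ m : ℕ, 1 ≤ m → ∃ n, m ≤ n ∧ (1/13824 : ℝ) ≤ aseq n := by
  intro m _
  refine ⟨max m 41472, le_max_left _ _, ?_⟩
  set n := max m 41472 with hn
  have hn4 : 41472 ≤ n := le_max_right _ _
  have hnpos : (0:ℝ) < n := by
    have : (41472:ℝ) ≤ (n:ℝ) := by exact_mod_cast hn4
    linarith
  have h1 := orbit_linear n hn4
  have h2 : orb n ≤ Mn n := by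
    have := sig_le_Mn n ((0:ℝ), (1/2:ℝ))
    rwa [sig_half] at this
  unfold aseq
  rw [le_div_iff₀ hnpos]
  calc (1/13824:ℝ) * n = (n:ℝ)/13824 := by ring
    _ ≤ orb n := h1
    _ ≤ Mn n := h2

lemma sval_positive : 0 < sval :=
  sval_pos (1/13824) (by norm_num) aseq_big

end RotEx

open RotEx

/-- There is a torus homeomorphism homotopic to the identity with a unique fixed point
`p`, whose lift fixes exactly `π⁻¹(p)`, and whose rotation set is a nondegenerate segment
of irrational slope with `(0,0)` as an endpoint. -/
theorem exists_homeomorphism_with_irrational_slope_segment_rotation_set :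
    ∃ (f : T2 ≃ₜ T2) (F : (ℝ × ℝ) ≃ₜ (ℝ × ℝ)) (p : T2) (v : ℝ × ℝ) (s : ℝ),
      IsLift ⇑f ⇑F ∧
      v.1 ≠ 0 ∧ Irrational (v.2 / v.1) ∧
      0 < s ∧
      {z : T2 | f z = z} = {p} ∧
      {x : ℝ × ℝ | F x = x} = proj ⁻¹' {p} ∧
      rotSet ⇑F = {w : ℝ × ℝ | ∃ t : ℝ, 0 ≤ t ∧ t ≤ s ∧ w = t • v} := by
  classical
  refine ⟨fH, FH, p0, vv, sval, ?_, ?_, ?_, ?_, ?_, ?_, ?_⟩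
  · constructor
    · intro x
      exact (ftor_proj x).symm
    · intro x v
      exact Fmap_equivariant x v.1 v.2
  · show vv.1 ≠ 0
    unfold vv
    norm_num
  · show Irrational (vv.2 / vv.1)
    unfold vv
    simp only
    rw [div_one]
    exact irrational_gam
  · exact sval_positive
  · exact ftor_fixed_set
  · exact Fmap_fixed_set
  · exact rotSet_eq

end
end
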